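/- arXiv:1805.11763 — 4 statements merged into one kernel-verified Lean document; each statement's English description precedes it below -/
import Mathlib

section
/- Fix 0 ≤ a ≤ 1, 0 ≤ c < b ≤ 1 with a ≠ b, a ≠ c. Over all pairs (α,β) of probability distributions on a finite set such that D(z(b)‖z(a)) and D(z(c)‖z(a)) are finite and positive (where z(t) = tα + (1-t)β), the supremum of D(z(b)‖z(a))/D(z(c)‖z(a)) equals ρ(a,b,c). -/
noncomputable def zeta (t s : ℝ) : ℝ := s + (1 - t) * Real.log (1 - s)
noncomputable def xi (s t : ℝ) : ℝ := zeta t t - zeta t s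
noncomputable def rho (a b c : ℝ) : ℝ := if a < 1 then xi a b / xi a c else (1 - b) / (1 - c)

noncomputable def KL {n : ℕ} (p q : Fin n → ℝ) : ℝ :=
  ∑ i, p i * Real.log (p i / q i)

open Real Set


/-- affine interpolation -/
noncomputable def gA (u v t : ℝ) : ℝ := t * u + (1 - t) * v
/-- per-coordinate KL-type term -/
noncomputable def hA (a u v t : ℝ) : ℝ :=
  gA u v t * (Real.log (gA u v t) - Real.log (gA u v a)) - gA u v t + gA u v a
/-- the extremal function -/
noncomputable def XiF (a t : ℝ) : ℝ := t - a + (1 - t) * (Real.log (1 - t) - Real.log (1 - a))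

lemma gA_hasDerivAt (u v t : ℝ) : HasDerivAt (gA u v) (u - v) t := by
  have h : HasDerivAt (fun t : ℝ => t * u + (1 - t) * v) (1 * u + (0 - 1) * v) t :=
    ((hasDerivAt_id t).mul_const u).add
      (((hasDerivAt_const t (1:ℝ)).sub (hasDerivAt_id t)).mul_const v)
  exact h.congr_deriv (by ring)

lemma gA_continuous (u v : ℝ) : Continuous (gA u v) := by
  unfold gA; continuity

lemma hA_continuous (a u v : ℝ) : Continuous (hA a u v) := by
  have : hA a u v = fun t =>
      (gA u v t * Real.log (gA u v t)) - gA u v t * Real.log (gA u v a) - gA u v t + gA u v a := by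
    funext t; unfold hA; ring
  rw [this]
  exact (((Real.continuous_mul_log.comp (gA_continuous u v)).sub
    ((gA_continuous u v).mul continuous_const)).sub (gA_continuous u v)).add continuous_const

lemma XiF_continuous (a : ℝ) : Continuous (XiF a) := by
  have : XiF a = fun t =>
      t - a + ((1 - t) * Real.log (1 - t) - (1 - t) * Real.log (1 - a)) := by
    funext t; unfold XiF; ring
  rw [this]
  have c1 : Continuous fun t : ℝ => (1 - t) * Real.log (1 - t) :=
    Real.continuous_mul_log.comp (by continuity)
  continuity

lemma XiF_self (a : ℝ) : XiF a a = 0 := by simp [XiF]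

lemma XiF_hasDerivAt (a : ℝ) {t : ℝ} (ht : t < 1) :
    HasDerivAt (XiF a) (Real.log (1 - a) - Real.log (1 - t)) t := by
  have h1t : (1 : ℝ) - t ≠ 0 := by linarith
  have hlog : HasDerivAt (fun t : ℝ => Real.log (1 - t)) ((0 - 1) / (1 - t)) t :=
    (((hasDerivAt_const t (1:ℝ)).sub (hasDerivAt_id t))).log h1t
  have h := ((hasDerivAt_id t).sub_const a).add
      ((((hasDerivAt_const t (1:ℝ)).sub (hasDerivAt_id t))).mul
        (hlog.sub_const (Real.log (1 - a))))
  have heq : (1 : ℝ) + ((0 - 1) * (Real.log (1 - t) - Real.log (1 - a)) +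
      (1 - t) * ((0 - 1) / (1 - t))) = Real.log (1 - a) - Real.log (1 - t) := by
    field_simp; ring
  unfold XiF
  exact h.congr_deriv heq

lemma XiF_strictMonoOn (a : ℝ) (ha : a < 1) : StrictMonoOn (XiF a) (Icc a 1) := by
  apply strictMonoOn_of_deriv_pos (convex_Icc a 1) (XiF_continuous a).continuousOn
  intro t ht
  rw [interior_Icc] at ht
  rw [(XiF_hasDerivAt a ht.2).deriv]
  have : Real.log (1 - t) < Real.log (1 - a) :=
    Real.log_lt_log (by linarith [ht.2]) (by linarith [ht.1])
  linarith

lemma XiF_strictAntiOn (a : ℝ) (ha : a < 1) : StrictAntiOn (XiF a) (Icc 0 a) := by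
  apply strictAntiOn_of_deriv_neg (convex_Icc 0 a) (XiF_continuous a).continuousOn
  intro t ht
  rw [interior_Icc] at ht
  rw [(XiF_hasDerivAt a (by linarith [ht.2])).deriv]
  have : Real.log (1 - a) < Real.log (1 - t) :=
    Real.log_lt_log (by linarith [ht.1, ht.2]) (by linarith [ht.1, ht.2])
  linarith

lemma XiF_pos {a t : ℝ} (ha : 0 ≤ a) (ha1 : a < 1) (ht0 : 0 ≤ t) (ht1 : t ≤ 1) (hta : t ≠ a) :
    0 < XiF a t := by
  rcases lt_or_gt_of_ne hta with h | h
  · have := XiF_strictAntiOn a ha1 ⟨ht0, h.le⟩ ⟨ha, le_refl a⟩ h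
    rwa [XiF_self] at this
  · have := XiF_strictMonoOn a ha1 ⟨le_refl a, ha1.le⟩ ⟨h.le, ht1⟩ h
    rwa [XiF_self] at this

lemma XiF_nonneg {a t : ℝ} (ha : 0 ≤ a) (ha1 : a < 1) (ht0 : 0 ≤ t) (ht1 : t ≤ 1) :
    0 ≤ XiF a t := by
  rcases eq_or_ne t a with rfl | h
  · rw [XiF_self]
  · exact (XiF_pos ha ha1 ht0 ht1 h).le

lemma xi_eq_XiF (a t : ℝ) : xi a t = XiF a t := by
  unfold xi zeta XiF; ring

section helpers
variable {D : Set ℝ} {f f' : ℝ → ℝ}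

lemma antitoneOn_of_hasDerivAt_nonpos (hD : Convex ℝ D)
    (hc : ContinuousOn f D) (hd : ∀ x ∈ interior D, HasDerivAt f (f' x) x)
    (h0 : ∀ x ∈ interior D, f' x ≤ 0) : AntitoneOn f D :=
  antitoneOn_of_deriv_nonpos hD hc
    (fun x hx => ((hd x hx).differentiableAt).differentiableWithinAt)
    (fun x hx => by rw [(hd x hx).deriv]; exact h0 x hx)

lemma monotoneOn_of_hasDerivAt_nonneg (hD : Convex ℝ D)
    (hc : ContinuousOn f D) (hd : ∀ x ∈ interior D, HasDerivAt f (f' x) x)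
    (h0 : ∀ x ∈ interior D, 0 ≤ f' x) : MonotoneOn f D :=
  monotoneOn_of_deriv_nonneg hD hc
    (fun x hx => ((hd x hx).differentiableAt).differentiableWithinAt)
    (fun x hx => by rw [(hd x hx).deriv]; exact h0 x hx)

end helpers

/-- g stays positive in the open interval when it is positive somewhere -/
lemma gA_pos {u v a : ℝ} (hu : 0 ≤ u) (hv : 0 ≤ v) (hga : 0 < gA u v a)
    {t : ℝ} (h0 : 0 < t) (h1 : t < 1) : 0 < gA u v t := by
  rcases hu.lt_or_eq with hu' | hu'
  · have h2 : 0 < t * u := mul_pos h0 hu'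
    have h3 : 0 ≤ (1 - t) * v := mul_nonneg (by linarith) hv
    unfold gA; linarith
  · rcases hv.lt_or_eq with hv' | hv'
    · have h2 : 0 < (1 - t) * v := mul_pos (by linarith) hv'
      have h3 : 0 ≤ t * u := mul_nonneg h0.le hu
      unfold gA; linarith
    · exfalso; unfold gA at hga; rw [← hu', ← hv'] at hga; simp at hga

noncomputable def mC (u v t : ℝ) : ℝ := (u - v)^2 * ((1 - t) / gA u v t)
noncomputable def mdC (u v t : ℝ) : ℝ := -((u - v)^2 * u / (gA u v t)^2)
noncomputable def hdC (a u v t : ℝ) : ℝ := (u - v) * (Real.log (gA u v t) - Real.log (gA u v a))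
noncomputable def xdC (a t : ℝ) : ℝ := Real.log (1 - a) - Real.log (1 - t)
noncomputable def psiC (a u v t : ℝ) : ℝ := mC u v t * xdC a t - hdC a u v t
noncomputable def VC (a u v t : ℝ) : ℝ := mC u v t * XiF a t - hA a u v t
noncomputable def WC (a u v t : ℝ) : ℝ := hdC a u v t * XiF a t - hA a u v t * xdC a t
noncomputable def uuC (a u v t : ℝ) : ℝ := mC u v a * xdC a t - hdC a u v t
noncomputable def UC (a u v t : ℝ) : ℝ := mC u v a * XiF a t - hA a u v t

lemma hA_self (a u v : ℝ) : hA a u v a = 0 := by unfold hA; ring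
lemma hdC_self (a u v : ℝ) : hdC a u v a = 0 := by unfold hdC; ring
lemma xdC_self (a : ℝ) : xdC a a = 0 := by unfold xdC; ring

lemma hA_hasDerivAt (a u v : ℝ) {t : ℝ} (hg : 0 < gA u v t) :
    HasDerivAt (hA a u v) (hdC a u v t) t := by
  have hlog : HasDerivAt (fun s => Real.log (gA u v s)) ((u - v) / gA u v t) t :=
    (gA_hasDerivAt u v t).log hg.ne'
  have h := (((gA_hasDerivAt u v t).mul (hlog.sub_const (Real.log (gA u v a)))).sub
      (gA_hasDerivAt u v t)).add_const (gA u v a)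
  unfold hA hdC
  exact h.congr_deriv (by field_simp; ring)

lemma mC_hasDerivAt (u v : ℝ) {t : ℝ} (hg : 0 < gA u v t) :
    HasDerivAt (mC u v) (mdC u v t) t := by
  have hdiv : HasDerivAt (fun s : ℝ => (1 - s) / gA u v s)
      (((0 - 1) * gA u v t - (1 - t) * (u - v)) / (gA u v t)^2) t :=
    (((hasDerivAt_const t (1:ℝ)).sub (hasDerivAt_id t))).div (gA_hasDerivAt u v t) hg.ne'
  have h := hdiv.const_mul ((u - v)^2)
  unfold mC mdC
  refine h.congr_deriv ?_
  have : (0 - 1) * gA u v t - (1 - t) * (u - v) = -u := by unfold gA; ring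
  rw [this]; try field_simp; try ring

lemma hdC_hasDerivAt (a u v : ℝ) {t : ℝ} (hg : 0 < gA u v t) :
    HasDerivAt (hdC a u v) ((u - v)^2 / gA u v t) t := by
  have hlog : HasDerivAt (fun s => Real.log (gA u v s)) ((u - v) / gA u v t) t :=
    (gA_hasDerivAt u v t).log hg.ne'
  have h := (hlog.sub_const (Real.log (gA u v a))).const_mul (u - v)
  unfold hdC
  exact h.congr_deriv (by field_simp)

lemma xdC_hasDerivAt (a : ℝ) {t : ℝ} (ht : t < 1) :
    HasDerivAt (xdC a) (1 / (1 - t)) t := by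
  have h1t : (1 : ℝ) - t ≠ 0 := by linarith
  have hlog : HasDerivAt (fun s : ℝ => Real.log (1 - s)) ((0 - 1) / (1 - t)) t :=
    (((hasDerivAt_const t (1:ℝ)).sub (hasDerivAt_id t))).log h1t
  have h := (hasDerivAt_const t (Real.log (1 - a))).sub hlog
  unfold xdC
  exact h.congr_deriv (by field_simp; ring)

lemma psiC_hasDerivAt (a u v : ℝ) {t : ℝ} (hg : 0 < gA u v t) (ht : t < 1) :
    HasDerivAt (psiC a u v) (mdC u v t * xdC a t) t := by
  have h := ((mC_hasDerivAt u v hg).mul (xdC_hasDerivAt a ht)).sub (hdC_hasDerivAt a u v hg)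
  unfold psiC
  refine h.congr_deriv ?_
  have h1t : (1 : ℝ) - t ≠ 0 := by linarith
  have : mC u v t * (1 / (1 - t)) = (u - v)^2 / gA u v t := by
    unfold mC; field_simp
  rw [this]; ring

lemma VC_hasDerivAt (a u v : ℝ) {t : ℝ} (hg : 0 < gA u v t) (ht : t < 1) :
    HasDerivAt (VC a u v) (mdC u v t * XiF a t + psiC a u v t) t := by
  have h := ((mC_hasDerivAt u v hg).mul (XiF_hasDerivAt a ht)).sub (hA_hasDerivAt a u v hg)
  unfold VC
  refine h.congr_deriv ?_
  unfold psiC xdC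
  ring

lemma WC_hasDerivAt (a u v : ℝ) {t : ℝ} (hg : 0 < gA u v t) (ht : t < 1) :
    HasDerivAt (WC a u v) ((1 / (1 - t)) * VC a u v t) t := by
  have h := ((hdC_hasDerivAt a u v hg).mul (XiF_hasDerivAt a ht)).sub
    ((hA_hasDerivAt a u v hg).mul (xdC_hasDerivAt a ht))
  unfold WC
  refine h.congr_deriv ?_
  have h1t : (1 : ℝ) - t ≠ 0 := by linarith
  have hm : mC u v t * (1 / (1 - t)) = (u - v)^2 / gA u v t := by
    unfold mC; field_simp
  unfold VC
  have hxd : Real.log (1 - a) - Real.log (1 - t) = xdC a t := rfl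
  rw [mul_sub, ← hm]
  unfold xdC
  ring

lemma uuC_hasDerivAt (a u v : ℝ) {t : ℝ} (hg : 0 < gA u v t) (ht : t < 1) :
    HasDerivAt (uuC a u v) ((mC u v a - mC u v t) * (1 / (1 - t))) t := by
  have h := ((xdC_hasDerivAt a ht).const_mul (mC u v a)).sub (hdC_hasDerivAt a u v hg)
  unfold uuC
  refine h.congr_deriv ?_
  have h1t : (1 : ℝ) - t ≠ 0 := by linarith
  have hm : mC u v t * (1 / (1 - t)) = (u - v)^2 / gA u v t := by
    unfold mC; field_simp
  rw [sub_mul, ← hm]; try ring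

lemma UC_hasDerivAt (a u v : ℝ) {t : ℝ} (hg : 0 < gA u v t) (ht : t < 1) :
    HasDerivAt (UC a u v) (uuC a u v t) t := by
  have h := ((XiF_hasDerivAt a ht).const_mul (mC u v a)).sub (hA_hasDerivAt a u v hg)
  unfold UC uuC xdC
  exact h.congr_deriv (by ring)

lemma mdC_nonpos (u v : ℝ) (hu : 0 ≤ u) (t : ℝ) : mdC u v t ≤ 0 := by
  unfold mdC
  have : (0:ℝ) ≤ (u - v)^2 * u / (gA u v t)^2 := by positivity
  linarith

lemma coord_main {a b c u v : ℝ} (ha : 0 ≤ a) (ha1 : a < 1) (hc : 0 ≤ c) (hcb : c < b)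
    (hb : b ≤ 1) (hab : a ≠ b) (hac : a ≠ c) (hu : 0 ≤ u) (hv : 0 ≤ v)
    (hga : 0 < gA u v a) :
    hA a u v b * XiF a c ≤ XiF a b * hA a u v c := by
  have hgR : ∀ t ∈ Ico a 1, 0 < gA u v t := by
    intro t ht
    rcases eq_or_lt_of_le ht.1 with rfl | h
    · exact hga
    · exact gA_pos hu hv hga (lt_of_le_of_lt ha h) ht.2
  have hgL : ∀ t ∈ Ioc 0 a, 0 < gA u v t := by
    intro t ht
    rcases eq_or_lt_of_le ht.2 with h | h
    · rw [h]; exact hga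
    · exact gA_pos hu hv hga ht.1 (h.trans ha1)
  have hxdR : ∀ t ∈ Ico a 1, 0 ≤ xdC a t := by
    intro t ht
    have := Real.log_le_log (show (0:ℝ) < 1 - t by linarith [ht.2])
      (show (1:ℝ) - t ≤ 1 - a by linarith [ht.1])
    unfold xdC; linarith
  have hxdL : ∀ t ∈ Ioc 0 a, xdC a t ≤ 0 := by
    intro t ht
    have := Real.log_le_log (show (0:ℝ) < 1 - a by linarith)
      (show (1:ℝ) - a ≤ 1 - t by linarith [ht.2])
    unfold xdC; linarith
  have hXiR : ∀ t ∈ Ico a 1, 0 ≤ XiF a t := fun t ht =>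
    XiF_nonneg ha ha1 (le_trans ha ht.1) ht.2.le
  have hXiL : ∀ t ∈ Ioc 0 a, 0 ≤ XiF a t := fun t ht =>
    XiF_nonneg ha ha1 ht.1.le (le_trans ht.2 ha1.le)
  have hpsi_a : psiC a u v a = 0 := by unfold psiC; rw [xdC_self, hdC_self]; ring
  have hV_a : VC a u v a = 0 := by unfold VC; rw [XiF_self, hA_self]; ring
  have hW_a : WC a u v a = 0 := by unfold WC; rw [xdC_self, hdC_self, hA_self]; ring
  have huu_a : uuC a u v a = 0 := by unfold uuC; rw [xdC_self, hdC_self]; ring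
  have hU_a : UC a u v a = 0 := by unfold UC; rw [XiF_self, hA_self]; ring
  -- m is antitone on both regions
  have hmR : AntitoneOn (mC u v) (Ico a 1) := by
    apply antitoneOn_of_hasDerivAt_nonpos (convex_Ico a 1) (f' := mdC u v)
      (fun t ht => (mC_hasDerivAt u v (hgR t ht)).continuousAt.continuousWithinAt)
      (fun t ht => by rw [interior_Ico] at ht
                      exact mC_hasDerivAt u v (hgR t (Ioo_subset_Ico_self ht)))
      (fun t _ => mdC_nonpos u v hu t)
  have hmL : AntitoneOn (mC u v) (Ioc 0 a) := by
    apply antitoneOn_of_hasDerivAt_nonpos (convex_Ioc 0 a) (f' := mdC u v)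
      (fun t ht => (mC_hasDerivAt u v (hgL t ht)).continuousAt.continuousWithinAt)
      (fun t ht => by rw [interior_Ioc] at ht
                      exact mC_hasDerivAt u v (hgL t (Ioo_subset_Ioc_self ht)))
      (fun t _ => mdC_nonpos u v hu t)
  -- right-hand chains
  have hpsiR : ∀ t ∈ Ico a 1, psiC a u v t ≤ 0 := by
    have hanti : AntitoneOn (psiC a u v) (Ico a 1) := by
      apply antitoneOn_of_hasDerivAt_nonpos (convex_Ico a 1)
        (f' := fun t => mdC u v t * xdC a t)
        (fun t ht => (psiC_hasDerivAt a u v (hgR t ht) ht.2).continuousAt.continuousWithinAt)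
        (fun t ht => by rw [interior_Ico] at ht
                        exact psiC_hasDerivAt a u v (hgR t (Ioo_subset_Ico_self ht)) ht.2)
        (fun t ht => by rw [interior_Ico] at ht
                        exact mul_nonpos_of_nonpos_of_nonneg (mdC_nonpos u v hu t)
                          (hxdR t (Ioo_subset_Ico_self ht)))
    intro t ht
    have := hanti (left_mem_Ico.mpr ha1) ht ht.1
    rwa [hpsi_a] at this
  have hVR : ∀ t ∈ Ico a 1, VC a u v t ≤ 0 := by
    have hanti : AntitoneOn (VC a u v) (Ico a 1) := by
      apply antitoneOn_of_hasDerivAt_nonpos (convex_Ico a 1)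
        (f' := fun t => mdC u v t * XiF a t + psiC a u v t)
        (fun t ht => (VC_hasDerivAt a u v (hgR t ht) ht.2).continuousAt.continuousWithinAt)
        (fun t ht => by rw [interior_Ico] at ht
                        exact VC_hasDerivAt a u v (hgR t (Ioo_subset_Ico_self ht)) ht.2)
        (fun t ht => by
          rw [interior_Ico] at ht
          have h1 := mul_nonpos_of_nonpos_of_nonneg (mdC_nonpos u v hu t)
            (hXiR t (Ioo_subset_Ico_self ht))
          have h2 := hpsiR t (Ioo_subset_Ico_self ht)
          show mdC u v t * XiF a t + psiC a u v t ≤ 0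
          linarith)
    intro t ht
    have := hanti (left_mem_Ico.mpr ha1) ht ht.1
    rwa [hV_a] at this
  have hWR : ∀ t ∈ Ico a 1, WC a u v t ≤ 0 := by
    have hanti : AntitoneOn (WC a u v) (Ico a 1) := by
      apply antitoneOn_of_hasDerivAt_nonpos (convex_Ico a 1)
        (f' := fun t => (1 / (1 - t)) * VC a u v t)
        (fun t ht => (WC_hasDerivAt a u v (hgR t ht) ht.2).continuousAt.continuousWithinAt)
        (fun t ht => by rw [interior_Ico] at ht
                        exact WC_hasDerivAt a u v (hgR t (Ioo_subset_Ico_self ht)) ht.2)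
        (fun t ht => by
          rw [interior_Ico] at ht
          have h0 : (0:ℝ) < 1 - t := by linarith [ht.2]
          have h1 : (0:ℝ) ≤ 1 / (1 - t) := by positivity
          exact mul_nonpos_of_nonneg_of_nonpos h1 (hVR t (Ioo_subset_Ico_self ht)))
    intro t ht
    have := hanti (left_mem_Ico.mpr ha1) ht ht.1
    rwa [hW_a] at this
  -- left-hand chains
  have hpsiL : ∀ t ∈ Ioc 0 a, psiC a u v t ≤ 0 := by
    rcases le_or_gt a 0 with h0a | h0a
    · intro t ht; exact absurd (ht.1.trans_le ht.2) (lt_irrefl 0 ∘ (·.trans_le h0a))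
    · have hmono : MonotoneOn (psiC a u v) (Ioc 0 a) := by
        apply monotoneOn_of_hasDerivAt_nonneg (convex_Ioc 0 a)
          (f' := fun t => mdC u v t * xdC a t)
          (fun t ht => (psiC_hasDerivAt a u v (hgL t ht) (lt_of_le_of_lt ht.2 ha1)).continuousAt.continuousWithinAt)
          (fun t ht => by rw [interior_Ioc] at ht
                          exact psiC_hasDerivAt a u v (hgL t (Ioo_subset_Ioc_self ht))
                            (lt_of_lt_of_le ht.2 ha1.le))
          (fun t ht => by
            rw [interior_Ioc] at ht
            have h1 := mdC_nonpos u v hu t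
            have h2 := hxdL t (Ioo_subset_Ioc_self ht)
            show 0 ≤ mdC u v t * xdC a t
            nlinarith)
      intro t ht
      have := hmono ht (right_mem_Ioc.mpr h0a) ht.2
      rwa [hpsi_a] at this
  have hVL : ∀ t ∈ Ioc 0 a, 0 ≤ VC a u v t := by
    rcases le_or_gt a 0 with h0a | h0a
    · intro t ht; exact absurd (ht.1.trans_le ht.2) (lt_irrefl 0 ∘ (·.trans_le h0a))
    · have hanti : AntitoneOn (VC a u v) (Ioc 0 a) := by
        apply antitoneOn_of_hasDerivAt_nonpos (convex_Ioc 0 a)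
          (f' := fun t => mdC u v t * XiF a t + psiC a u v t)
          (fun t ht => (VC_hasDerivAt a u v (hgL t ht) (lt_of_le_of_lt ht.2 ha1)).continuousAt.continuousWithinAt)
          (fun t ht => by rw [interior_Ioc] at ht
                          exact VC_hasDerivAt a u v (hgL t (Ioo_subset_Ioc_self ht))
                            (lt_of_lt_of_le ht.2 ha1.le))
          (fun t ht => by
            rw [interior_Ioc] at ht
            have h1 := mul_nonpos_of_nonpos_of_nonneg (mdC_nonpos u v hu t)
              (hXiL t (Ioo_subset_Ioc_self ht))
            have h2 := hpsiL t (Ioo_subset_Ioc_self ht)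
            show mdC u v t * XiF a t + psiC a u v t ≤ 0
            linarith)
      intro t ht
      have := hanti ht (right_mem_Ioc.mpr h0a) ht.2
      rwa [hV_a] at this
  have hWL : ∀ t ∈ Ioc 0 a, WC a u v t ≤ 0 := by
    rcases le_or_gt a 0 with h0a | h0a
    · intro t ht; exact absurd (ht.1.trans_le ht.2) (lt_irrefl 0 ∘ (·.trans_le h0a))
    · have hmono : MonotoneOn (WC a u v) (Ioc 0 a) := by
        apply monotoneOn_of_hasDerivAt_nonneg (convex_Ioc 0 a)
          (f' := fun t => (1 / (1 - t)) * VC a u v t)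
          (fun t ht => (WC_hasDerivAt a u v (hgL t ht) (lt_of_le_of_lt ht.2 ha1)).continuousAt.continuousWithinAt)
          (fun t ht => by rw [interior_Ioc] at ht
                          exact WC_hasDerivAt a u v (hgL t (Ioo_subset_Ioc_self ht))
                            (lt_of_lt_of_le ht.2 ha1.le))
          (fun t ht => by
            rw [interior_Ioc] at ht
            have h0 : (0:ℝ) < 1 - t := by linarith [lt_of_lt_of_le ht.2 ha1.le]
            have h1 : (0:ℝ) ≤ 1 / (1 - t) := by positivity
            exact mul_nonneg h1 (hVL t (Ioo_subset_Ioc_self ht)))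
      intro t ht
      have := hmono ht (right_mem_Ioc.mpr h0a) ht.2
      rwa [hW_a] at this
  -- ratio antitone on both regions
  have hratR : AntitoneOn (fun t => hA a u v t / XiF a t) (Ioc a 1) := by
    apply antitoneOn_of_hasDerivAt_nonpos (convex_Ioc a 1)
      (f' := fun t => (hdC a u v t * XiF a t - hA a u v t * xdC a t) / (XiF a t)^2)
    · apply ContinuousOn.div (hA_continuous a u v).continuousOn (XiF_continuous a).continuousOn
      intro t ht
      exact (XiF_pos ha ha1 (le_trans ha ht.1.le) ht.2 ht.1.ne').ne'
    · intro t ht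
      rw [interior_Ioc] at ht
      have hXine : XiF a t ≠ 0 :=
        (XiF_pos ha ha1 (le_trans ha ht.1.le) ht.2.le ht.1.ne').ne'
      exact (hA_hasDerivAt a u v (hgR t (Ioo_subset_Ico_self ht))).div
        (XiF_hasDerivAt a ht.2) hXine
    · intro t ht
      rw [interior_Ioc] at ht
      exact div_nonpos_of_nonpos_of_nonneg (hWR t (Ioo_subset_Ico_self ht)) (sq_nonneg _)
  have hratL : AntitoneOn (fun t => hA a u v t / XiF a t) (Ico 0 a) := by
    apply antitoneOn_of_hasDerivAt_nonpos (convex_Ico 0 a)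
      (f' := fun t => (hdC a u v t * XiF a t - hA a u v t * xdC a t) / (XiF a t)^2)
    · apply ContinuousOn.div (hA_continuous a u v).continuousOn (XiF_continuous a).continuousOn
      intro t ht
      exact (XiF_pos ha ha1 ht.1 (le_trans ht.2.le ha1.le) ht.2.ne).ne'
    · intro t ht
      rw [interior_Ico] at ht
      have hXine : XiF a t ≠ 0 :=
        (XiF_pos ha ha1 ht.1.le (le_trans ht.2.le ha1.le) ht.2.ne).ne'
      exact (hA_hasDerivAt a u v (hgL t ⟨ht.1, ht.2.le⟩)).div
        (XiF_hasDerivAt a (lt_of_lt_of_le ht.2 ha1.le)) hXine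
    · intro t ht
      rw [interior_Ico] at ht
      exact div_nonpos_of_nonpos_of_nonneg (hWL t ⟨ht.1, ht.2.le⟩) (sq_nonneg _)
  -- U chains (for the straddling case)
  have huuR : ∀ t ∈ Ico a 1, 0 ≤ uuC a u v t := by
    have hmono : MonotoneOn (uuC a u v) (Ico a 1) := by
      apply monotoneOn_of_hasDerivAt_nonneg (convex_Ico a 1)
        (f' := fun t => (mC u v a - mC u v t) * (1 / (1 - t)))
        (fun t ht => (uuC_hasDerivAt a u v (hgR t ht) ht.2).continuousAt.continuousWithinAt)
        (fun t ht => by rw [interior_Ico] at ht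
                        exact uuC_hasDerivAt a u v (hgR t (Ioo_subset_Ico_self ht)) ht.2)
        (fun t ht => by
          rw [interior_Ico] at ht
          have h1 : mC u v t ≤ mC u v a :=
            hmR (left_mem_Ico.mpr ha1) (Ioo_subset_Ico_self ht) ht.1.le
          have h0 : (0:ℝ) < 1 - t := by linarith [ht.2]
          have h2 : (0:ℝ) ≤ 1 / (1 - t) := by positivity
          exact mul_nonneg (by linarith) h2)
    intro t ht
    have := hmono (left_mem_Ico.mpr ha1) ht ht.1
    rwa [huu_a] at this
  have huuL : ∀ t ∈ Ioc 0 a, 0 ≤ uuC a u v t := by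
    rcases le_or_gt a 0 with h0a | h0a
    · intro t ht; exact absurd (ht.1.trans_le ht.2) (lt_irrefl 0 ∘ (·.trans_le h0a))
    · have hanti : AntitoneOn (uuC a u v) (Ioc 0 a) := by
        apply antitoneOn_of_hasDerivAt_nonpos (convex_Ioc 0 a)
          (f' := fun t => (mC u v a - mC u v t) * (1 / (1 - t)))
          (fun t ht => (uuC_hasDerivAt a u v (hgL t ht) (lt_of_le_of_lt ht.2 ha1)).continuousAt.continuousWithinAt)
          (fun t ht => by rw [interior_Ioc] at ht
                          exact uuC_hasDerivAt a u v (hgL t (Ioo_subset_Ioc_self ht))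
                            (lt_of_lt_of_le ht.2 ha1.le))
          (fun t ht => by
            rw [interior_Ioc] at ht
            have h1 : mC u v a ≤ mC u v t :=
              hmL (Ioo_subset_Ioc_self ht) (right_mem_Ioc.mpr h0a) ht.2.le
            have h0 : (0:ℝ) < 1 - t := by linarith [lt_of_lt_of_le ht.2 ha1.le]
            have h2 : (0:ℝ) ≤ 1 / (1 - t) := by positivity
            exact mul_nonpos_of_nonpos_of_nonneg (by linarith) h2)
      intro t ht
      have := hanti ht (right_mem_Ioc.mpr h0a) ht.2
      rwa [huu_a] at this
  have hUcont : Continuous (UC a u v) := by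
    unfold UC
    exact (continuous_const.mul (XiF_continuous a)).sub (hA_continuous a u v)
  have hUR : ∀ t ∈ Icc a 1, 0 ≤ UC a u v t := by
    have hmono : MonotoneOn (UC a u v) (Icc a 1) := by
      apply monotoneOn_of_hasDerivAt_nonneg (convex_Icc a 1)
        (f' := uuC a u v) hUcont.continuousOn
        (fun t ht => by rw [interior_Icc] at ht
                        exact UC_hasDerivAt a u v (hgR t (Ioo_subset_Ico_self ht)) ht.2)
        (fun t ht => by rw [interior_Icc] at ht
                        exact huuR t (Ioo_subset_Ico_self ht))
    intro t ht
    have := hmono (left_mem_Icc.mpr ha1.le) ht ht.1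
    rwa [hU_a] at this
  have hUL : ∀ t ∈ Icc 0 a, UC a u v t ≤ 0 := by
    have hmono : MonotoneOn (UC a u v) (Icc 0 a) := by
      apply monotoneOn_of_hasDerivAt_nonneg (convex_Icc 0 a)
        (f' := uuC a u v) hUcont.continuousOn
        (fun t ht => by rw [interior_Icc] at ht
                        exact UC_hasDerivAt a u v (hgL t (Ioo_subset_Ioc_self ht))
                          (lt_of_lt_of_le ht.2 ha1.le))
        (fun t ht => by rw [interior_Icc] at ht
                        exact huuL t (Ioo_subset_Ioc_self ht))
    intro t ht
    have := hmono ht (right_mem_Icc.mpr (le_trans ht.1 ht.2)) ht.2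
    rwa [hU_a] at this
  -- case analysis
  rcases lt_trichotomy a c with h1 | h1 | h1
  · -- a < c < b : both on the right
    have hbI : b ∈ Ioc a 1 := ⟨h1.trans hcb, hb⟩
    have hcI : c ∈ Ioc a 1 := ⟨h1, le_trans hcb.le hb⟩
    have hq := hratR hcI hbI hcb.le
    have hXib : 0 < XiF a b := XiF_pos ha ha1 (le_trans ha hbI.1.le) hb hbI.1.ne'
    have hXic : 0 < XiF a c := XiF_pos ha ha1 hc hcI.2 hcI.1.ne'
    rw [div_le_div_iff₀ hXib hXic] at hq
    linarith [hq]
  · exact absurd h1 hac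
  · -- c < a
    rcases lt_trichotomy b a with h2 | h2 | h2
    · -- c < b < a : both on the left
      have hbI : b ∈ Ico 0 a := ⟨le_trans hc hcb.le, h2⟩
      have hcI : c ∈ Ico 0 a := ⟨hc, h1⟩
      have hq := hratL hcI hbI hcb.le
      have hXib : 0 < XiF a b := XiF_pos ha ha1 hbI.1 (le_trans h2.le ha1.le) h2.ne
      have hXic : 0 < XiF a c := XiF_pos ha ha1 hc (le_trans h1.le ha1.le) h1.ne
      rw [div_le_div_iff₀ hXib hXic] at hq
      linarith [hq]
    · exact absurd h2.symm hab
    · -- c < a < b : straddling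
      have hUb := hUR b ⟨h2.le, hb⟩
      have hUc := hUL c ⟨hc, h1.le⟩
      have hXib : 0 ≤ XiF a b := XiF_nonneg ha ha1 (le_trans ha h2.le) hb
      have hXic : 0 ≤ XiF a c := XiF_nonneg ha ha1 hc (le_trans h1.le ha1.le)
      unfold UC at hUb hUc
      calc hA a u v b * XiF a c ≤ (mC u v a * XiF a b) * XiF a c :=
            mul_le_mul_of_nonneg_right (by linarith) hXic
        _ = XiF a b * (mC u v a * XiF a c) := by ring
        _ ≤ XiF a b * hA a u v c := mul_le_mul_of_nonneg_left (by linarith) hXib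

lemma gA_zero {a b u v : ℝ} (hab : a ≠ b) (h1 : gA u v a = 0) (h2 : gA u v b = 0) :
    u = 0 ∧ v = 0 := by
  unfold gA at h1 h2
  have hub : u = v := by
    have h3 : (a - b) * (u - v) = 0 := by linear_combination h1 - h2
    rcases mul_eq_zero.mp h3 with h | h
    · exact absurd (sub_eq_zero.mp h) hab
    · linarith [sub_eq_zero.mp h]
  subst hub
  have hv : u = 0 := by linear_combination h1
  exact ⟨hv, hv⟩

lemma hA_zero (a t : ℝ) : hA a 0 0 t = 0 := by unfold hA gA; simp

lemma gA_one (u v : ℝ) : gA u v 1 = u := by unfold gA; ring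

lemma gA_nonneg {u v : ℝ} (hu : 0 ≤ u) (hv : 0 ≤ v) {t : ℝ} (h0 : 0 ≤ t) (h1 : t ≤ 1) :
    0 ≤ gA u v t := by
  unfold gA
  have := mul_nonneg h0 hu
  have := mul_nonneg (by linarith : (0:ℝ) ≤ 1 - t) hv
  linarith

lemma hA_nonneg {a u v t : ℝ} (hga : 0 < gA u v a) (hgt : 0 ≤ gA u v t) :
    0 ≤ hA a u v t := by
  unfold hA
  rcases hgt.lt_or_eq with h | h
  · have hl : Real.log (gA u v a / gA u v t) ≤ gA u v a / gA u v t - 1 :=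
      Real.log_le_sub_one_of_pos (by positivity)
    rw [Real.log_div hga.ne' h.ne'] at hl
    have h3 := mul_le_mul_of_nonneg_left hl h.le
    have h2 : gA u v t * (gA u v a / gA u v t - 1) = gA u v a - gA u v t := by
      field_simp
    nlinarith
  · rw [← h]; simpa using hga.le

/-- the W-function for the a = 1 case -/
noncomputable def W2C (u v t : ℝ) : ℝ := hdC 1 u v t * (1 - t) + hA 1 u v t

lemma W2C_hasDerivAt (u v : ℝ) {t : ℝ} (hg : 0 < gA u v t) :
    HasDerivAt (W2C u v) ((u - v)^2 / gA u v t * (1 - t)) t := by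
  have h := ((hdC_hasDerivAt 1 u v hg).mul
      ((hasDerivAt_const t (1:ℝ)).sub (hasDerivAt_id t))).add (hA_hasDerivAt 1 u v hg)
  unfold W2C
  exact h.congr_deriv (by simp only [Pi.sub_apply, id_eq]; ring)

lemma coord_one {b c u v : ℝ} (hc : 0 ≤ c) (hcb : c < b) (hb : b < 1)
    (hu : 0 < u) (hv : 0 ≤ v) :
    hA 1 u v b * (1 - c) ≤ (1 - b) * hA 1 u v c := by
  have hgpos : ∀ t ∈ Ioc (0:ℝ) 1, 0 < gA u v t := by
    intro t ht
    have h1 : 0 < t * u := mul_pos ht.1 hu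
    have h2 : 0 ≤ (1 - t) * v := mul_nonneg (by linarith [ht.2]) hv
    unfold gA; linarith
  have hW2_one : W2C u v 1 = 0 := by
    unfold W2C
    rw [hdC_self, hA_self]; ring
  have hW2 : ∀ t ∈ Ioc (0:ℝ) 1, W2C u v t ≤ 0 := by
    have hmono : MonotoneOn (W2C u v) (Ioc 0 1) := by
      apply monotoneOn_of_hasDerivAt_nonneg (convex_Ioc 0 1)
        (f' := fun t => (u - v)^2 / gA u v t * (1 - t))
        (fun t ht => (W2C_hasDerivAt u v (hgpos t ht)).continuousAt.continuousWithinAt)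
        (fun t ht => by rw [interior_Ioc] at ht
                        exact W2C_hasDerivAt u v (hgpos t (Ioo_subset_Ioc_self ht)))
        (fun t ht => by
          rw [interior_Ioc] at ht
          have := hgpos t (Ioo_subset_Ioc_self ht)
          have h1 : (0:ℝ) ≤ (u - v)^2 / gA u v t := by positivity
          have h2 : (0:ℝ) ≤ 1 - t := by linarith [ht.2]
          exact mul_nonneg h1 h2)
    intro t ht
    have := hmono ht (right_mem_Ioc.mpr one_pos) ht.2
    rwa [hW2_one] at this
  have hrat : AntitoneOn (fun t => hA 1 u v t / (1 - t)) (Ico 0 1) := by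
    apply antitoneOn_of_hasDerivAt_nonpos (convex_Ico 0 1)
      (f' := fun t => (hdC 1 u v t * (1 - t) - hA 1 u v t * (0 - 1)) / (1 - t)^2)
    · apply ContinuousOn.div (hA_continuous 1 u v).continuousOn
        (by continuity : Continuous fun t : ℝ => 1 - t).continuousOn
      intro t ht
      have : (0:ℝ) < 1 - t := by linarith [ht.2]
      exact this.ne'
    · intro t ht
      rw [interior_Ico] at ht
      have h1t : (1:ℝ) - t ≠ 0 := by linarith [ht.2]
      exact (hA_hasDerivAt 1 u v (hgpos t ⟨ht.1, ht.2.le⟩)).div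
        ((hasDerivAt_const t (1:ℝ)).sub (hasDerivAt_id t)) h1t
    · intro t ht
      rw [interior_Ico] at ht
      have hW := hW2 t ⟨ht.1, ht.2.le⟩
      unfold W2C at hW
      apply div_nonpos_of_nonpos_of_nonneg _ (sq_nonneg _)
      linarith
  rcases hc.lt_or_eq with hc' | hc'
  · have hq := hrat ⟨hc, hcb.trans hb⟩ ⟨le_trans hc hcb.le, hb⟩ hcb.le
    rw [div_le_div_iff₀ (by linarith : (0:ℝ) < 1 - b) (by linarith : (0:ℝ) < 1 - c)] at hq
    linarith
  · -- c = 0; same argument (c ∈ Ico 0 1 anyway)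
    have hq := hrat ⟨hc, hcb.trans hb⟩ ⟨le_trans hc hcb.le, hb⟩ hcb.le
    rw [div_le_div_iff₀ (by linarith : (0:ℝ) < 1 - b) (by linarith : (0:ℝ) < 1 - c)] at hq
    linarith

lemma KL_eq_sum {n : ℕ} (α β : Fin n → ℝ) (a t : ℝ)
    (hα : ∑ i, α i = 1) (hβ : ∑ i, β i = 1)
    (hz : ∀ i, a * α i + (1 - a) * β i = 0 → t * α i + (1 - t) * β i = 0) :
    KL (fun i => t * α i + (1 - t) * β i) (fun i => a * α i + (1 - a) * β i)
      = ∑ i, hA a (α i) (β i) t := by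
  have key : ∀ i, gA (α i) (β i) t * Real.log (gA (α i) (β i) t / gA (α i) (β i) a)
      = hA a (α i) (β i) t + gA (α i) (β i) t - gA (α i) (β i) a := by
    intro i
    rcases eq_or_ne (gA (α i) (β i) t) 0 with h0 | h0
    · rw [h0]; unfold hA; rw [h0]; ring
    · have ha0 : gA (α i) (β i) a ≠ 0 := by
        intro h; exact h0 (hz i h)
      rw [Real.log_div h0 ha0]; unfold hA; ring
  have hKL : KL (fun i => t * α i + (1 - t) * β i) (fun i => a * α i + (1 - a) * β i)
      = ∑ i, (hA a (α i) (β i) t + gA (α i) (β i) t - gA (α i) (β i) a) := by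
    unfold KL
    exact Finset.sum_congr rfl (fun i _ => key i)
  have hsum : ∀ s : ℝ, ∑ i, gA (α i) (β i) s = 1 := by
    intro s
    unfold gA
    rw [Finset.sum_add_distrib, ← Finset.mul_sum, ← Finset.mul_sum, hα, hβ]
    ring
  rw [hKL, Finset.sum_sub_distrib, Finset.sum_add_distrib, hsum a, hsum t]
  ring

lemma upper_bound {n : ℕ} (a b c : ℝ) (ha : 0 ≤ a) (ha1 : a ≤ 1) (hc : 0 ≤ c) (hcb : c < b)
    (hb : b ≤ 1) (hab : a ≠ b) (hac : a ≠ c) (α β : Fin n → ℝ)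
    (hα0 : ∀ i, 0 ≤ α i) (hα1 : ∑ i, α i = 1) (hβ0 : ∀ i, 0 ≤ β i) (hβ1 : ∑ i, β i = 1)
    (hvb : ∀ i, a * α i + (1 - a) * β i = 0 → b * α i + (1 - b) * β i = 0)
    (hvc : ∀ i, a * α i + (1 - a) * β i = 0 → c * α i + (1 - c) * β i = 0)
    (hKb : 0 < KL (fun i => b * α i + (1 - b) * β i) (fun i => a * α i + (1 - a) * β i))
    (hKc : 0 < KL (fun i => c * α i + (1 - c) * β i) (fun i => a * α i + (1 - a) * β i)) :
    KL (fun i => b * α i + (1 - b) * β i) (fun i => a * α i + (1 - a) * β i) /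
      KL (fun i => c * α i + (1 - c) * β i) (fun i => a * α i + (1 - a) * β i) ≤ rho a b c := by
  rw [KL_eq_sum α β a b hα1 hβ1 hvb] at hKb ⊢
  rw [KL_eq_sum α β a c hα1 hβ1 hvc] at hKc ⊢
  rcases ha1.lt_or_eq with haa | haa
  · -- a < 1
    have hrho : rho a b c = XiF a b / XiF a c := by
      unfold rho; rw [if_pos haa, xi_eq_XiF, xi_eq_XiF]
    rw [hrho]
    have hXic : 0 < XiF a c := XiF_pos ha haa hc (le_trans hcb.le hb) (Ne.symm hac)
    rw [div_le_div_iff₀ hKc hXic]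
    rw [Finset.sum_mul, Finset.mul_sum]
    apply Finset.sum_le_sum
    intro i _
    rcases eq_or_ne (gA (α i) (β i) a) 0 with h0 | h0
    · obtain ⟨hu0, hv0⟩ := gA_zero hab h0 (hvb i h0)
      rw [hu0, hv0, hA_zero, hA_zero]
      simp
    · have hga : 0 < gA (α i) (β i) a :=
        (gA_nonneg (hα0 i) (hβ0 i) ha ha1).lt_of_ne (Ne.symm h0)
      exact coord_main ha haa hc hcb hb hab hac (hα0 i) (hβ0 i) hga
  · -- a = 1
    subst haa
    have hb1 : b < 1 := lt_of_le_of_ne hb (fun h => hab (h.symm))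
    have hrho : rho 1 b c = (1 - b) / (1 - c) := by
      unfold rho; rw [if_neg (lt_irrefl 1)]
    rw [hrho]
    have hc1 : (0:ℝ) < 1 - c := by linarith
    rw [div_le_div_iff₀ hKc hc1]
    rw [Finset.sum_mul, Finset.mul_sum]
    apply Finset.sum_le_sum
    intro i _
    rcases (hα0 i).lt_or_eq with hu | hu
    · exact coord_one hc hcb hb1 hu (hβ0 i)
    · -- α i = 0 : degenerate
      have h0 : gA (α i) (β i) 1 = 0 := by rw [gA_one, ← hu]
      have hzb : gA (α i) (β i) b = 0 := hvb i (by unfold gA at h0; linarith [h0])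
      obtain ⟨hu0, hv0⟩ := gA_zero (hab) h0 hzb
      rw [hu0, hv0, hA_zero, hA_zero]
      simp

noncomputable def Phi (bb gg q : ℝ) : ℝ :=
  (1 - bb*q) * (Real.log (1 - bb*q) - Real.log (1 - gg*q)) - (1 - bb*q) + (1 - gg*q)

lemma Phi_zero (bb gg : ℝ) : Phi bb gg 0 = 0 := by unfold Phi; simp

lemma Phi_hasDerivAt (bb gg : ℝ) : HasDerivAt (Phi bb gg) 0 0 := by
  have l1 : HasDerivAt (fun q : ℝ => 1 - bb*q) (-bb) 0 := by
    have := ((hasDerivAt_id (0:ℝ)).const_mul bb).const_sub 1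
    simpa using this
  have l2 : HasDerivAt (fun q : ℝ => 1 - gg*q) (-gg) 0 := by
    have := ((hasDerivAt_id (0:ℝ)).const_mul gg).const_sub 1
    simpa using this
  have hne1 : (1:ℝ) - bb*0 ≠ 0 := by norm_num
  have hne2 : (1:ℝ) - gg*0 ≠ 0 := by norm_num
  have hl1 : HasDerivAt (fun q : ℝ => Real.log (1 - bb*q)) (-bb / (1 - bb*0)) 0 := l1.log hne1
  have hl2 : HasDerivAt (fun q : ℝ => Real.log (1 - gg*q)) (-gg / (1 - gg*0)) 0 := l2.log hne2
  have h := ((l1.mul (hl1.sub hl2)).sub l1).add l2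
  unfold Phi
  refine h.congr_deriv ?_
  norm_num

lemma Phi_slope_tendsto (bb gg : ℝ) :
    Filter.Tendsto (fun q => Phi bb gg q / q) (nhdsWithin 0 (Set.Ioi 0)) (nhds 0) := by
  have h := (Phi_hasDerivAt bb gg)
  rw [hasDerivAt_iff_tendsto_slope] at h
  have heq : ∀ q ∈ Set.Ioi (0:ℝ), slope (Phi bb gg) 0 q = Phi bb gg q / q := by
    intro q _
    rw [slope_def_field]
    rw [Phi_zero]
    ring_nf
  have h2 : Filter.Tendsto (slope (Phi bb gg) 0) (nhdsWithin 0 (Set.Ioi 0)) (nhds 0) :=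
    h.mono_left (nhdsWithin_mono 0 (fun q hq => Set.mem_compl_singleton_iff.mpr (ne_of_gt hq)))
  exact Filter.Tendsto.congr' (Filter.eventuallyEq_of_mem self_mem_nhdsWithin heq) h2

lemma hA_left {a q t : ℝ} (hq : 0 < q) (ha1 : a < 1) (ht : t ≤ 1) :
    hA a 0 q t = q * XiF a t := by
  have hg : gA 0 q t = (1 - t) * q := by unfold gA; ring
  have hga : gA 0 q a = (1 - a) * q := by unfold gA; ring
  unfold hA XiF
  rw [hg, hga]
  rcases ht.lt_or_eq with h | h
  · rw [Real.log_mul (by linarith : (1:ℝ) - t ≠ 0) hq.ne',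
      Real.log_mul (by linarith : (1:ℝ) - a ≠ 0) hq.ne']
    ring
  · subst h
    norm_num
    ring

lemma hA_right_eq (a t q : ℝ) : hA a 1 (1-q) t = Phi (1-t) (1-a) q := by
  have e1 : gA 1 (1-q) t = 1 - (1-t)*q := by unfold gA; ring
  have e2 : gA 1 (1-q) a = 1 - (1-a)*q := by unfold gA; ring
  unfold hA Phi
  rw [e1, e2]

open Filter in
lemma key_num_tendsto (a t : ℝ) :
    Tendsto (fun q => (q * XiF a t + Phi (1-t) (1-a) q) / q)
      (nhdsWithin 0 (Set.Ioi 0)) (nhds (XiF a t)) := by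
  have h1 := Phi_slope_tendsto (1-t) (1-a)
  have h2 : Tendsto (fun q => XiF a t + Phi (1-t) (1-a) q / q)
      (nhdsWithin 0 (Set.Ioi 0)) (nhds (XiF a t + 0)) := tendsto_const_nhds.add h1
  rw [add_zero] at h2
  refine Tendsto.congr' (Filter.eventuallyEq_of_mem self_mem_nhdsWithin ?_) h2
  intro q hq
  have hq0 : q ≠ 0 := ne_of_gt hq
  field_simp

open Filter in
lemma tendsto_ratio_lt {a b c : ℝ} (ha : 0 ≤ a) (ha1 : a < 1) (hc : 0 ≤ c) (hcb : c < b)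
    (hb : b ≤ 1) (hac : a ≠ c) :
    Tendsto (fun q => (q * XiF a b + Phi (1-b) (1-a) q) / (q * XiF a c + Phi (1-c) (1-a) q))
      (nhdsWithin 0 (Set.Ioi 0)) (nhds (XiF a b / XiF a c)) := by
  have hXic : XiF a c ≠ 0 :=
    (XiF_pos ha ha1 hc (le_trans hcb.le hb) (Ne.symm hac)).ne'
  have h := (key_num_tendsto a b).div (key_num_tendsto a c) hXic
  refine Tendsto.congr' (Filter.eventuallyEq_of_mem self_mem_nhdsWithin ?_) h
  intro q hq
  have hq0 : q ≠ 0 := ne_of_gt hq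
  show ((q * XiF a b + Phi (1-b) (1-a) q) / q) / ((q * XiF a c + Phi (1-c) (1-a) q) / q) = _
  rw [div_div_div_comm, div_self hq0, div_one]

noncomputable def Psi1 (t e : ℝ) : ℝ :=
  (1 - t*(1-e)) * (Real.log (1 - t*(1-e)) - Real.log e) - (1 - t*(1-e)) + e
noncomputable def Psi2 (t e : ℝ) : ℝ := (1-e) * (t * Real.log t + 1 - t)
noncomputable def B1C (t e : ℝ) : ℝ :=
  (1 - t*(1-e)) * Real.log (1 - t*(1-e)) - (1 - t*(1-e)) + e

lemma hA_eq_Psi1 (t e : ℝ) : hA 1 e 1 t = Psi1 t e := by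
  have e1 : gA e 1 t = 1 - t*(1-e) := by unfold gA; ring
  have e2 : gA e 1 1 = e := by unfold gA; ring
  unfold hA Psi1
  rw [e1, e2]

lemma hA_eq_Psi2 {t e : ℝ} (ht : 0 ≤ t) (he : e < 1) : hA 1 (1-e) 0 t = Psi2 t e := by
  have e1 : gA (1-e) 0 t = t*(1-e) := by unfold gA; ring
  have e2 : gA (1-e) 0 1 = 1-e := by unfold gA; ring
  unfold hA Psi2
  rw [e1, e2]
  rcases ht.lt_or_eq with h | h
  · rw [Real.log_mul h.ne' (by linarith : (1:ℝ)-e ≠ 0)]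
    ring
  · rw [← h]; simp

lemma Psi_decomp (t e : ℝ) :
    Psi1 t e + Psi2 t e = (1 - t*(1-e)) * (-Real.log e) + (B1C t e + Psi2 t e) := by
  unfold Psi1 B1C; ring

open Filter in
lemma Linv_tendsto : Tendsto (fun e : ℝ => (-Real.log e)⁻¹) (nhdsWithin 0 (Set.Ioi 0)) (nhds 0) := by
  have h : Tendsto (fun e : ℝ => -Real.log e) (nhdsWithin 0 (Set.Ioi 0)) atTop :=
    tendsto_neg_atTop_iff.mpr Real.tendsto_log_nhdsGT_zero
  exact h.inv_tendsto_atTop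

open Filter in
lemma key_one (t : ℝ) (ht0 : 0 ≤ t) (ht1 : t < 1) :
    Tendsto (fun e => (Psi1 t e + Psi2 t e) * (-Real.log e)⁻¹)
      (nhdsWithin 0 (Set.Ioi 0)) (nhds (1-t)) := by
  have hAt : Tendsto (fun e : ℝ => 1 - t*(1-e)) (nhdsWithin 0 (Set.Ioi 0)) (nhds (1-t)) := by
    have hco : Continuous (fun e : ℝ => 1 - t*(1-e)) := by continuity
    have h1 := (hco.tendsto 0).mono_left
      (nhdsWithin_le_nhds : nhdsWithin (0:ℝ) (Set.Ioi 0) ≤ nhds 0)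
    simpa using h1
  have hBt : Tendsto (fun e => B1C t e + Psi2 t e) (nhdsWithin 0 (Set.Ioi 0))
      (nhds (B1C t 0 + Psi2 t 0)) := by
    have c1 : ContinuousAt (fun e : ℝ => 1 - t*(1-e)) 0 := by fun_prop
    have c2 : ContinuousAt (fun e : ℝ => Real.log (1 - t*(1-e))) 0 :=
      c1.log (by norm_num; linarith)
    have c3 : ContinuousAt (fun e => B1C t e + Psi2 t e) 0 := by
      unfold B1C Psi2
      exact (((c1.mul c2).sub c1).add continuousAt_id).add
        ((continuousAt_const.sub continuousAt_id).mul continuousAt_const)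
    exact c3.tendsto.mono_left nhdsWithin_le_nhds
  have h := hAt.add (hBt.mul Linv_tendsto)
  rw [mul_zero, add_zero] at h
  refine Tendsto.congr' (Filter.eventuallyEq_of_mem
    (Ioo_mem_nhdsGT_of_mem ⟨le_refl (0:ℝ), one_pos⟩) ?_) h
  intro e he
  have hL : 0 < -Real.log e := by
    have := Real.log_neg he.1 he.2
    linarith
  show 1 - t*(1-e) + (B1C t e + Psi2 t e) * (-Real.log e)⁻¹
      = (Psi1 t e + Psi2 t e) * (-Real.log e)⁻¹
  have hLne : -Real.log e ≠ 0 := hL.ne'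
  have hinv : -Real.log e * (-Real.log e)⁻¹ = 1 := mul_inv_cancel₀ hLne
  rw [Psi_decomp]
  linear_combination (-(1 - t*(1-e))) * hinv

open Filter in
lemma tendsto_ratio_one {b c : ℝ} (hc : 0 ≤ c) (hcb : c < b) (hb1 : b < 1) :
    Tendsto (fun e => (Psi1 b e + Psi2 b e) / (Psi1 c e + Psi2 c e))
      (nhdsWithin 0 (Set.Ioi 0)) (nhds ((1-b)/(1-c))) := by
  have h := (key_one b (le_trans hc hcb.le) hb1).div
    (key_one c hc (hcb.trans hb1)) (by linarith : (1:ℝ) - c ≠ 0)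
  refine Tendsto.congr' (Filter.eventuallyEq_of_mem
    (Ioo_mem_nhdsGT_of_mem ⟨le_refl (0:ℝ), one_pos⟩) ?_) h
  intro e he
  have hL : 0 < -Real.log e := by
    have := Real.log_neg he.1 he.2
    linarith
  have hLne : (-Real.log e)⁻¹ ≠ 0 := by positivity
  show ((Psi1 b e + Psi2 b e) * (-Real.log e)⁻¹) / ((Psi1 c e + Psi2 c e) * (-Real.log e)⁻¹) = _
  rw [mul_div_mul_right _ _ hLne]

lemma mul_log_add_pos {x : ℝ} (h0 : 0 ≤ x) (h1 : x < 1) : 0 < x * Real.log x + 1 - x := by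
  rcases h0.lt_or_eq with h | h
  · have hx : x⁻¹ ≠ 1 := fun hh => h1.ne (inv_eq_one.mp hh)
    have hlt := Real.log_lt_sub_one_of_pos (inv_pos.mpr h) hx
    rw [Real.log_inv] at hlt
    have h2 := mul_lt_mul_of_pos_left hlt h
    have h3 : x * (x⁻¹ - 1) = 1 - x := by field_simp
    nlinarith
  · rw [← h]; norm_num

lemma pos_comb {a t q : ℝ} (ha : 0 ≤ a) (ha1 : a < 1) (ht0 : 0 ≤ t) (ht1 : t ≤ 1)
    (hta : t ≠ a) (hq : 0 < q) (hq1 : q < 1) : 0 < q * XiF a t + Phi (1-t) (1-a) q := by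
  have h1 : 0 < q * XiF a t := mul_pos hq (XiF_pos ha ha1 ht0 ht1 hta)
  have h2 : 0 ≤ Phi (1-t) (1-a) q := by
    rw [← hA_right_eq]
    apply hA_nonneg
    · show 0 < gA 1 (1-q) a
      unfold gA
      nlinarith
    · exact gA_nonneg zero_le_one (by linarith) ht0 ht1
  linarith

lemma pos_comb_one {t e : ℝ} (ht0 : 0 ≤ t) (ht1 : t < 1) (he : 0 < e) (he1 : e < 1) :
    0 < Psi1 t e + Psi2 t e := by
  have h1 : 0 ≤ Psi1 t e := by
    rw [← hA_eq_Psi1]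
    apply hA_nonneg
    · show 0 < gA e 1 1
      rw [gA_one]; exact he
    · exact gA_nonneg he.le zero_le_one ht0 ht1.le
  have h2 : 0 < Psi2 t e := by
    unfold Psi2
    have := mul_log_add_pos ht0 ht1
    nlinarith
  linarith

lemma KL2_eq {a t q : ℝ} (hq : 0 < q) (hq1 : q < 1) (ha : 0 ≤ a) (ha1 : a < 1) (ht1 : t ≤ 1) :
    KL (fun i : Fin 2 => t * (![0,1]) i + (1-t) * (![q,1-q]) i)
       (fun i : Fin 2 => a * (![0,1]) i + (1-a) * (![q,1-q]) i)
      = q * XiF a t + Phi (1-t) (1-a) q := by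
  have hz : ∀ i : Fin 2, a * (![0,1]) i + (1-a) * (![q,1-q]) i = 0 →
      t * (![0,1]) i + (1-t) * (![q,1-q]) i = 0 := by
    intro i h
    exfalso
    fin_cases i
    · norm_num at h
      rcases h with h | h <;> linarith
    · norm_num at h
      nlinarith [mul_pos (show (0:ℝ) < 1 - a by linarith) (show (0:ℝ) < 1 - q by linarith)]
  rw [KL_eq_sum (![0,1]) (![q,1-q]) a t (by simp [Fin.sum_univ_two])
    (by simp [Fin.sum_univ_two]) hz]
  rw [Fin.sum_univ_two]
  simp only [Matrix.cons_val_zero, Matrix.cons_val_one, Matrix.head_cons]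
  rw [hA_left hq ha1 ht1, hA_right_eq]

lemma KL2_eq_one {t e : ℝ} (he : 0 < e) (he1 : e < 1) (ht0 : 0 ≤ t) (ht1 : t ≤ 1) :
    KL (fun i : Fin 2 => t * (![e,1-e]) i + (1-t) * (![1,0]) i)
       (fun i : Fin 2 => 1 * (![e,1-e]) i + (1-(1:ℝ)) * (![1,0]) i)
      = Psi1 t e + Psi2 t e := by
  have hz : ∀ i : Fin 2, (1:ℝ) * (![e,1-e]) i + (1-(1:ℝ)) * (![1,0]) i = 0 →
      t * (![e,1-e]) i + (1-t) * (![1,0]) i = 0 := by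
    intro i h
    exfalso
    fin_cases i
    · norm_num at h
      linarith
    · norm_num at h
      linarith
  rw [KL_eq_sum (![e,1-e]) (![1,0]) 1 t (by simp [Fin.sum_univ_two]) (by simp [Fin.sum_univ_two]) hz]
  rw [Fin.sum_univ_two]
  simp only [Matrix.cons_val_zero, Matrix.cons_val_one, Matrix.head_cons]
  rw [hA_eq_Psi1, hA_eq_Psi2 ht0 he1]

theorem stmt14 (a b c : ℝ) (ha : 0 ≤ a) (ha1 : a ≤ 1) (hc : 0 ≤ c) (hcb : c < b)
    (hb : b ≤ 1) (hab : a ≠ b) (hac : a ≠ c) :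
    IsLUB { x : ℝ | ∃ (n : ℕ) (α β : Fin n → ℝ),
      (∀ i, 0 ≤ α i) ∧ (∑ i, α i = 1) ∧
      (∀ i, 0 ≤ β i) ∧ (∑ i, β i = 1) ∧
      (∀ i, (a * α i + (1 - a) * β i) = 0 → (b * α i + (1 - b) * β i) = 0) ∧
      (∀ i, (a * α i + (1 - a) * β i) = 0 → (c * α i + (1 - c) * β i) = 0) ∧
      0 < KL (fun i => b * α i + (1 - b) * β i) (fun i => a * α i + (1 - a) * β i) ∧
      0 < KL (fun i => c * α i + (1 - c) * β i) (fun i => a * α i + (1 - a) * β i) ∧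
      x = KL (fun i => b * α i + (1 - b) * β i) (fun i => a * α i + (1 - a) * β i) /
          KL (fun i => c * α i + (1 - c) * β i) (fun i => a * α i + (1 - a) * β i) }
      (rho a b c) := by
  have hb0 : 0 ≤ b := le_trans hc hcb.le
  have hc1 : c ≤ 1 := le_trans hcb.le hb
  constructor
  · rintro x ⟨n, α, β, hα0, hα1, hβ0, hβ1, hvb, hvc, hKb, hKc, rfl⟩
    exact upper_bound a b c ha ha1 hc hcb hb hab hac α β hα0 hα1 hβ0 hβ1 hvb hvc hKb hKc
  · intro M hM
    rcases ha1.lt_or_eq with haa | haa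
    · -- a < 1 : two-point construction ![0,1], ![q,1-q]
      have hrho : rho a b c = XiF a b / XiF a c := by
        unfold rho; rw [if_pos haa, xi_eq_XiF, xi_eq_XiF]
      rw [hrho]
      refine le_of_tendsto (tendsto_ratio_lt ha haa hc hcb hb hac) ?_
      filter_upwards [Ioo_mem_nhdsGT_of_mem
        (Set.mem_Ico.mpr ⟨le_refl (0:ℝ), one_pos⟩)] with q hq
      apply hM
      refine ⟨2, ![0,1], ![q,1-q], ?_, ?_, ?_, ?_, ?_, ?_, ?_, ?_, ?_⟩
      · intro i; fin_cases i <;> norm_num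
      · simp [Fin.sum_univ_two]
      · intro i; fin_cases i <;> simp <;> linarith [hq.1, hq.2]
      · simp [Fin.sum_univ_two]
      · intro i h; exfalso; fin_cases i
        · norm_num at h
          rcases h with h | h <;> linarith [hq.1]
        · norm_num at h
          nlinarith [mul_pos (show (0:ℝ) < 1 - a by linarith)
            (show (0:ℝ) < 1 - q by linarith [hq.2])]
      · intro i h; exfalso; fin_cases i
        · norm_num at h
          rcases h with h | h <;> linarith [hq.1]
        · norm_num at h
          nlinarith [mul_pos (show (0:ℝ) < 1 - a by linarith)
            (show (0:ℝ) < 1 - q by linarith [hq.2])]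
      · rw [KL2_eq hq.1 hq.2 ha haa hb]
        exact pos_comb ha haa hb0 hb (Ne.symm hab) hq.1 hq.2
      · rw [KL2_eq hq.1 hq.2 ha haa hc1]
        exact pos_comb ha haa hc hc1 (Ne.symm hac) hq.1 hq.2
      · rw [KL2_eq hq.1 hq.2 ha haa hb, KL2_eq hq.1 hq.2 ha haa hc1]
    · -- a = 1 : two-point construction ![e,1-e], ![1,0]
      subst haa
      have hb1 : b < 1 := lt_of_le_of_ne hb (fun h => hab h.symm)
      have hrho : rho 1 b c = (1-b)/(1-c) := by
        unfold rho; rw [if_neg (lt_irrefl 1)]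
      rw [hrho]
      refine le_of_tendsto (tendsto_ratio_one hc hcb hb1) ?_
      filter_upwards [Ioo_mem_nhdsGT_of_mem
        (Set.mem_Ico.mpr ⟨le_refl (0:ℝ), one_pos⟩)] with e he
      apply hM
      refine ⟨2, ![e,1-e], ![1,0], ?_, ?_, ?_, ?_, ?_, ?_, ?_, ?_, ?_⟩
      · intro i; fin_cases i <;> simp <;> linarith [he.1, he.2]
      · simp [Fin.sum_univ_two]
      · intro i; fin_cases i <;> norm_num
      · simp [Fin.sum_univ_two]
      · intro i h; exfalso; fin_cases i <;> norm_num at h <;> linarith [he.1, he.2]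
      · intro i h; exfalso; fin_cases i <;> norm_num at h <;> linarith [he.1, he.2]
      · rw [KL2_eq_one he.1 he.2 hb0 hb]
        exact pos_comb_one hb0 hb1 he.1 he.2
      · rw [KL2_eq_one he.1 he.2 hc hc1]
        exact pos_comb_one hc (hcb.trans hb1) he.1 he.2
      · rw [KL2_eq_one he.1 he.2 hb0 hb, KL2_eq_one he.1 he.2 hc hc1]
end

section
/- Let α = (1 − δ·f(δ), δ·f(δ)) and β = (1 − δ, δ) be binary distributions, where δ ∈ (0,1), 0 ≤ f(δ) < 1, and f(δ) → 0 as δ → 0⁺. Fix 0 ≤ a ≤ 1, 0 ≤ c < b ≤ 1, a ≠ b, a ≠ c, and let z(t) = tα + (1-t)β, u = z(a), v = z(b), w = z(c). Then D(v‖u)/D(w‖u) → ρ(a,b,c) as δ → 0. -/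
open Filter Real Set

private lemma log_one_sub_le {u : ℝ} (hu1 : u < 1) : Real.log (1 - u) ≤ -u := by
  have := Real.log_le_sub_one_of_pos (x := 1 - u) (by linarith)
  linarith

private lemma le_log_one_sub {u : ℝ} (hu1 : u < 1) : -u / (1 - u) ≤ Real.log (1 - u) := by
  have h0 : (0:ℝ) < 1 - u := by linarith
  have h := Real.log_le_sub_one_of_pos (x := (1 - u)⁻¹) (by positivity)
  rw [Real.log_inv] at h
  have h2 : -((1 - u)⁻¹ - 1) ≤ Real.log (1 - u) := by linarith
  calc -u/(1-u) = -((1-u)⁻¹ - 1) := by field_simp; ring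
    _ ≤ _ := h2

private lemma tendsto_log_aux (q : ℝ → ℝ) (Q : ℝ)
    (hq0 : ∀ δ ∈ Set.Ioo (0:ℝ) 1, 0 ≤ q δ) (hq1 : ∀ δ ∈ Set.Ioo (0:ℝ) 1, q δ ≤ 1)
    (hQ : Filter.Tendsto q (nhdsWithin 0 (Set.Ioo (0:ℝ) 1)) (nhds Q)) :
    Filter.Tendsto (fun δ => Real.log (1 - δ * q δ) / δ)
      (nhdsWithin 0 (Set.Ioo (0:ℝ) 1)) (nhds (-Q)) := by
  have hδ : Tendsto (fun δ : ℝ => δ) (nhdsWithin 0 (Set.Ioo (0:ℝ) 1)) (nhds 0) :=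
    tendsto_id.mono_left nhdsWithin_le_nhds
  have hδq : Tendsto (fun δ => δ * q δ) (nhdsWithin 0 (Set.Ioo (0:ℝ) 1)) (nhds 0) := by
    simpa using hδ.mul hQ
  have hupper : Tendsto (fun δ => -(q δ)) (nhdsWithin 0 (Set.Ioo (0:ℝ) 1)) (nhds (-Q)) := hQ.neg
  have hlower : Tendsto (fun δ => -(q δ) / (1 - δ * q δ))
      (nhdsWithin 0 (Set.Ioo (0:ℝ) 1)) (nhds (-Q)) := by
    have := hQ.neg.div (tendsto_const_nhds.sub hδq) (by norm_num : (1:ℝ) - 0 ≠ 0)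
    rw [sub_zero, div_one] at this
    exact this
  refine tendsto_of_tendsto_of_tendsto_of_le_of_le' hlower hupper ?_ ?_
  · filter_upwards [self_mem_nhdsWithin] with δ hδm
    obtain ⟨h0, h1⟩ := hδm
    have hq0' := hq0 δ ⟨h0, h1⟩
    have hq1' := hq1 δ ⟨h0, h1⟩
    have hu0 : 0 ≤ δ * q δ := mul_nonneg h0.le hq0'
    have hu1 : δ * q δ < 1 := by nlinarith
    have h := le_log_one_sub hu1
    have hpos : 0 < 1 - δ * q δ := by linarith
    have := div_le_div_of_nonneg_right (c := δ) h h0.le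
    calc -(q δ) / (1 - δ * q δ) = (-(δ * q δ) / (1 - δ * q δ)) / δ := by
          field_simp
      _ ≤ Real.log (1 - δ * q δ) / δ := this
  · filter_upwards [self_mem_nhdsWithin] with δ hδm
    obtain ⟨h0, h1⟩ := hδm
    have hq0' := hq0 δ ⟨h0, h1⟩
    have hq1' := hq1 δ ⟨h0, h1⟩
    have hu1 : δ * q δ < 1 := by nlinarith
    have h := log_one_sub_le hu1
    have := div_le_div_of_nonneg_right (c := δ) h h0.le
    calc Real.log (1 - δ * q δ) / δ ≤ -(δ * q δ) / δ := this
      _ = -(q δ) := by field_simp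


open Filter Real Set

private lemma xi_pos {a c : ℝ} (ha1 : a < 1) (hc1 : c < 1) (hac : a ≠ c) : 0 < xi a c := by
  have hca : (0:ℝ) < 1 - c := by linarith
  have haa : (0:ℝ) < 1 - a := by linarith
  have hx : (0:ℝ) < (1-a)/(1-c) := div_pos haa hca
  have hx1 : (1-a)/(1-c) ≠ 1 := by
    intro h
    rw [div_eq_one_iff_eq (by linarith)] at h
    exact hac (by linarith)
  have h := Real.log_lt_sub_one_of_pos hx hx1
  have h2 : (1-c) * Real.log ((1-a)/(1-c)) < (1-c) * ((1-a)/(1-c) - 1) :=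
    mul_lt_mul_of_pos_left h hca
  rw [Real.log_div (by linarith) (by linarith)] at h2
  have h3 : (1-c) * ((1-a)/(1-c) - 1) = c - a := by field_simp; ring
  rw [h3] at h2
  unfold xi zeta
  nlinarith [h2]

private lemma main_lt (f : ℝ → ℝ)
    (hf : ∀ δ ∈ Set.Ioo (0:ℝ) 1, 0 ≤ f δ ∧ f δ < 1)
    (hf0' : Filter.Tendsto f (nhdsWithin 0 (Set.Ioo (0:ℝ) 1)) (nhds 0))
    (a t : ℝ) (ha0 : 0 ≤ a) (ha1 : a < 1) (ht0 : 0 ≤ t) (ht1 : t ≤ 1) :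
    Filter.Tendsto (fun δ =>
      ((1 - δ * (1 - t * (1 - f δ))) *
          Real.log ((1 - δ * (1 - t * (1 - f δ))) / (1 - δ * (1 - a * (1 - f δ)))) +
        (δ * (1 - t * (1 - f δ))) * Real.log ((1 - t * (1 - f δ)) / (1 - a * (1 - f δ)))) / δ)
      (nhdsWithin 0 (Set.Ioo (0:ℝ) 1)) (nhds (xi a t)) := by
  set F := nhdsWithin (0:ℝ) (Set.Ioo (0:ℝ) 1) with hF
  have hδ : Tendsto (fun δ : ℝ => δ) F (nhds 0) := tendsto_id.mono_left nhdsWithin_le_nhds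
  have hqmem : ∀ s : ℝ, 0 ≤ s → s ≤ 1 → ∀ δ ∈ Set.Ioo (0:ℝ) 1,
      0 ≤ 1 - s * (1 - f δ) ∧ 1 - s * (1 - f δ) ≤ 1 := by
    intro s hs0 hs1 δ hδm
    obtain ⟨hfa, hfb⟩ := hf δ hδm
    constructor <;> nlinarith
  have hqtend : ∀ s : ℝ, Tendsto (fun δ => 1 - s * (1 - f δ)) F (nhds (1 - s)) := by
    intro s
    have := (tendsto_const_nhds (x := (1:ℝ))).sub
      ((tendsto_const_nhds (x := s)).mul ((tendsto_const_nhds (x := (1:ℝ))).sub hf0'))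
    simpa using this
  have hδq : ∀ s : ℝ, Tendsto (fun δ => δ * (1 - s * (1 - f δ))) F (nhds 0) := by
    intro s
    simpa using hδ.mul (hqtend s)
  have hlogt := tendsto_log_aux (fun δ => 1 - t * (1 - f δ)) (1 - t)
    (fun δ h => (hqmem t ht0 ht1 δ h).1) (fun δ h => (hqmem t ht0 ht1 δ h).2) (hqtend t)
  have hloga := tendsto_log_aux (fun δ => 1 - a * (1 - f δ)) (1 - a)
    (fun δ h => (hqmem a ha0 ha1.le δ h).1) (fun δ h => (hqmem a ha0 ha1.le δ h).2) (hqtend a)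
  have hmul : Tendsto (fun δ => (1 - t * (1 - f δ)) * Real.log (1 - t * (1 - f δ))) F
      (nhds ((1 - t) * Real.log (1 - t))) :=
    (Real.continuous_mul_log.tendsto (1 - t)).comp (hqtend t)
  have hloga2 : Tendsto (fun δ => Real.log (1 - a * (1 - f δ))) F (nhds (Real.log (1 - a))) :=
    ((Real.continuousAt_log (by linarith : (1:ℝ) - a ≠ 0)).tendsto).comp (hqtend a)
  -- limit of the model function G
  have hG : Tendsto (fun δ =>
      (1 - δ * (1 - t * (1 - f δ))) *
        (Real.log (1 - δ * (1 - t * (1 - f δ))) / δ - Real.log (1 - δ * (1 - a * (1 - f δ))) / δ) +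
      ((1 - t * (1 - f δ)) * Real.log (1 - t * (1 - f δ)) -
        (1 - t * (1 - f δ)) * Real.log (1 - a * (1 - f δ)))) F
      (nhds (1 * (-(1 - t) - -(1 - a)) +
        ((1 - t) * Real.log (1 - t) - (1 - t) * Real.log (1 - a)))) := by
    refine Tendsto.add (Tendsto.mul ?_ (hlogt.sub hloga)) (hmul.sub ((hqtend t).mul hloga2))
    simpa using (tendsto_const_nhds (x := (1:ℝ))).sub (hδq t)
  have hval : 1 * (-(1 - t) - -(1 - a)) +
      ((1 - t) * Real.log (1 - t) - (1 - t) * Real.log (1 - a)) = xi a t := by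
    unfold xi zeta; ring
  rw [hval] at hG
  refine hG.congr' ?_
  filter_upwards [self_mem_nhdsWithin] with δ hδm
  obtain ⟨h0, h1⟩ := hδm
  have hqt := hqmem t ht0 ht1 δ ⟨h0, h1⟩
  have hqa := hqmem a ha0 ha1.le δ ⟨h0, h1⟩
  obtain ⟨hfa, hfb⟩ := hf δ ⟨h0, h1⟩
  have hqapos : 0 < 1 - a * (1 - f δ) := by nlinarith
  have h1t : 0 < 1 - δ * (1 - t * (1 - f δ)) := by nlinarith [hqt.1, hqt.2]
  have h1a : 0 < 1 - δ * (1 - a * (1 - f δ)) := by nlinarith [hqa.1, hqa.2]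
  have e1 : Real.log ((1 - δ * (1 - t * (1 - f δ))) / (1 - δ * (1 - a * (1 - f δ)))) =
      Real.log (1 - δ * (1 - t * (1 - f δ))) - Real.log (1 - δ * (1 - a * (1 - f δ))) :=
    Real.log_div (ne_of_gt h1t) (ne_of_gt h1a)
  have e2 : (1 - t * (1 - f δ)) * Real.log ((1 - t * (1 - f δ)) / (1 - a * (1 - f δ))) =
      (1 - t * (1 - f δ)) * Real.log (1 - t * (1 - f δ)) -
      (1 - t * (1 - f δ)) * Real.log (1 - a * (1 - f δ)) := by
    rcases eq_or_ne (1 - t * (1 - f δ)) 0 with h | h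
    · simp [h]
    · rw [Real.log_div h (ne_of_gt hqapos)]; ring
  rw [e1, ← e2]
  field_simp

private lemma f0_aux (t : ℝ) (ht0 : 0 ≤ t) (ht1 : t ≤ 1) :
    Filter.Tendsto (fun δ => ((1 - δ * (1 - t)) * Real.log (1 - δ * (1 - t))) / δ)
      (nhdsWithin 0 (Set.Ioo (0:ℝ) 1)) (nhds (-(1 - t))) := by
  have hδ : Tendsto (fun δ : ℝ => δ) (nhdsWithin 0 (Set.Ioo (0:ℝ) 1)) (nhds 0) :=
    tendsto_id.mono_left nhdsWithin_le_nhds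
  have h1 : Tendsto (fun δ => (1 - δ * (1 - t)) * (Real.log (1 - δ * (1 - t)) / δ))
      (nhdsWithin 0 (Set.Ioo (0:ℝ) 1)) (nhds (1 * -(1 - t))) := by
    refine Tendsto.mul ?_ (tendsto_log_aux (fun _ => 1 - t) (1 - t)
      (fun δ hδm => by linarith) (fun δ hδm => by linarith)
      tendsto_const_nhds)
    simpa using (tendsto_const_nhds (x := (1:ℝ))).sub (hδ.mul_const (1 - t))
  rw [one_mul] at h1
  exact h1.congr (fun δ => by rw [mul_div_assoc])

private lemma main_one (f : ℝ → ℝ)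
    (hf : ∀ δ ∈ Set.Ioo (0:ℝ) 1, 0 ≤ f δ ∧ f δ < 1)
    (hf0' : Filter.Tendsto f (nhdsWithin 0 (Set.Ioo (0:ℝ) 1)) (nhds 0))
    (t : ℝ) (ht0 : 0 ≤ t) (ht1 : t < 1) :
    Filter.Tendsto (fun δ =>
      ((1 - δ * (1 - t * (1 - f δ))) *
          Real.log ((1 - δ * (1 - t * (1 - f δ))) / (1 - δ * f δ)) +
        (δ * (1 - t * (1 - f δ))) * Real.log ((1 - t * (1 - f δ)) / f δ)) / (δ * (-Real.log (f δ))))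
      ((nhdsWithin 0 (Set.Ioo (0:ℝ) 1)) ⊓ Filter.principal {δ | f δ ≠ 0}) (nhds (1 - t)) := by
  set F := nhdsWithin (0:ℝ) (Set.Ioo (0:ℝ) 1) with hF
  set F1 := F ⊓ Filter.principal {δ | f δ ≠ 0} with hF1
  have hev : ∀ᶠ δ in F1, δ ∈ Set.Ioo (0:ℝ) 1 ∧ f δ ≠ 0 := by
    filter_upwards [Filter.mem_inf_of_left self_mem_nhdsWithin,
      Filter.mem_inf_of_right (Filter.mem_principal_self _)] with δ h1 h2
    exact ⟨h1, h2⟩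
  have hδ : Tendsto (fun δ : ℝ => δ) F (nhds 0) := tendsto_id.mono_left nhdsWithin_le_nhds
  have hqmem : ∀ δ ∈ Set.Ioo (0:ℝ) 1, 0 ≤ 1 - t * (1 - f δ) ∧ 1 - t * (1 - f δ) ≤ 1 := by
    intro δ hδm
    obtain ⟨hfa, hfb⟩ := hf δ hδm
    constructor <;> nlinarith
  have hqtend : Tendsto (fun δ => 1 - t * (1 - f δ)) F (nhds (1 - t)) := by
    simpa using (tendsto_const_nhds (x := (1:ℝ))).sub
      ((tendsto_const_nhds (x := t)).mul ((tendsto_const_nhds (x := (1:ℝ))).sub hf0'))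
  have hlogt := tendsto_log_aux (fun δ => 1 - t * (1 - f δ)) (1 - t)
    (fun δ h => (hqmem δ h).1) (fun δ h => (hqmem δ h).2) hqtend
  have hlogf : Tendsto (fun δ => Real.log (1 - δ * f δ) / δ) F (nhds (-0)) :=
    tendsto_log_aux f 0 (fun δ h => (hf δ h).1) (fun δ h => (hf δ h).2.le) hf0'
  have hmul : Tendsto (fun δ => (1 - t * (1 - f δ)) * Real.log (1 - t * (1 - f δ))) F
      (nhds ((1 - t) * Real.log (1 - t))) :=
    (Real.continuous_mul_log.tendsto (1 - t)).comp hqtend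
  have h1δq : Tendsto (fun δ => 1 - δ * (1 - t * (1 - f δ))) F (nhds 1) := by
    simpa using (tendsto_const_nhds (x := (1:ℝ))).sub (hδ.mul hqtend)
  -- inverse of -log f tends to zero on F1
  have hfF1 : Tendsto f F1 (nhdsWithin 0 (Set.Ioi (0:ℝ))) := by
    rw [tendsto_nhdsWithin_iff]
    refine ⟨hf0'.mono_left inf_le_left, ?_⟩
    filter_upwards [hev] with δ ⟨h1, h2⟩
    exact lt_of_le_of_ne (hf δ h1).1 (Ne.symm h2)
  have hnegtop : Tendsto (fun δ => -Real.log (f δ)) F1 atTop :=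
    tendsto_neg_atTop_iff.mpr (Real.tendsto_log_nhdsGT_zero.comp hfF1)
  have hinv : Tendsto (fun δ => (-Real.log (f δ))⁻¹) F1 (nhds 0) :=
    tendsto_inv_atTop_zero.comp hnegtop
  -- model function limit
  have hG : Tendsto (fun δ =>
      ((1 - δ * (1 - t * (1 - f δ))) *
          (Real.log (1 - δ * (1 - t * (1 - f δ))) / δ - Real.log (1 - δ * f δ) / δ) +
        (1 - t * (1 - f δ)) * Real.log (1 - t * (1 - f δ))) * (-Real.log (f δ))⁻¹ +
      (1 - t * (1 - f δ))) F1
      (nhds ((1 * (-(1 - t) - -0) + (1 - t) * Real.log (1 - t)) * 0 + (1 - t))) := by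
    refine Tendsto.add (Tendsto.mul ?_ hinv) (hqtend.mono_left inf_le_left)
    exact ((h1δq.mul (hlogt.sub hlogf)).add hmul).mono_left inf_le_left
  have hval : (1 * (-(1 - t) - -0) + (1 - t) * Real.log (1 - t)) * 0 + (1 - t) = 1 - t := by ring
  rw [hval] at hG
  refine hG.congr' ?_
  filter_upwards [hev] with δ ⟨⟨hd0, hd1⟩, hfne⟩
  obtain ⟨hfa, hfb⟩ := hf δ ⟨hd0, hd1⟩
  have hfpos : 0 < f δ := lt_of_le_of_ne hfa (Ne.symm hfne)
  have hlneg : Real.log (f δ) < 0 := Real.log_neg hfpos hfb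
  have hqpos : 0 < 1 - t * (1 - f δ) := by nlinarith
  have h1t : 0 < 1 - δ * (1 - t * (1 - f δ)) := by nlinarith
  have h1f : 0 < 1 - δ * f δ := by nlinarith
  have e1 : Real.log ((1 - δ * (1 - t * (1 - f δ))) / (1 - δ * f δ)) =
      Real.log (1 - δ * (1 - t * (1 - f δ))) - Real.log (1 - δ * f δ) :=
    Real.log_div (ne_of_gt h1t) (ne_of_gt h1f)
  have e2 : Real.log ((1 - t * (1 - f δ)) / f δ) =
      Real.log (1 - t * (1 - f δ)) - Real.log (f δ) :=
    Real.log_div (ne_of_gt hqpos) hfne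
  have hsne : δ * (-Real.log (f δ)) ≠ 0 :=
    mul_ne_zero (ne_of_gt hd0) (ne_of_gt (neg_pos.mpr hlneg))
  rw [e1, e2, eq_div_iff hsne]
  have hlne : Real.log (f δ) ≠ 0 := ne_of_lt hlneg
  field_simp
  ring

theorem stmt15 (f : ℝ → ℝ)
    (hf : ∀ δ ∈ Set.Ioo (0:ℝ) 1, 0 ≤ f δ ∧ f δ < 1)
    (hf0 : Filter.Tendsto f (nhdsWithin 0 (Set.Ioi 0)) (nhds 0))
    (a b c : ℝ) (ha : 0 ≤ a) (ha1 : a ≤ 1) (hc : 0 ≤ c) (hcb : c < b) (hb : b ≤ 1)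
    (hab : a ≠ b) (hac : a ≠ c)
    (α β : ℝ → Fin 2 → ℝ)
    (hα : ∀ δ, α δ = ![1 - δ * f δ, δ * f δ])
    (hβ : ∀ δ, β δ = ![1 - δ, δ]) :
    Filter.Tendsto
      (fun δ => KL (fun i => b * α δ i + (1 - b) * β δ i)
                   (fun i => a * α δ i + (1 - a) * β δ i) /
                KL (fun i => c * α δ i + (1 - c) * β δ i)
                   (fun i => a * α δ i + (1 - a) * β δ i))
      (nhdsWithin 0 (Set.Ioo 0 1)) (nhds (rho a b c)) := by
  classical
  have hf0' : Filter.Tendsto f (nhdsWithin 0 (Set.Ioo (0:ℝ) 1)) (nhds 0) :=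
    hf0.mono_left (nhdsWithin_mono 0 Set.Ioo_subset_Ioi_self)
  have hb0 : 0 ≤ b := le_trans hc hcb.le
  have hc1 : c < 1 := lt_of_lt_of_le hcb hb
  have hKL : ∀ s δ : ℝ, δ ≠ 0 →
      KL (fun i => s * α δ i + (1 - s) * β δ i) (fun i => a * α δ i + (1 - a) * β δ i) =
      (1 - δ * (1 - s * (1 - f δ))) *
        Real.log ((1 - δ * (1 - s * (1 - f δ))) / (1 - δ * (1 - a * (1 - f δ)))) +
      (δ * (1 - s * (1 - f δ))) * Real.log ((1 - s * (1 - f δ)) / (1 - a * (1 - f δ))) := by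
    intro s δ hδ
    rw [KL, Fin.sum_univ_two]
    simp only [hα, hβ, Matrix.cons_val_zero, Matrix.cons_val_one, Matrix.head_cons]
    have e0 : s * (1 - δ * f δ) + (1 - s) * (1 - δ) = 1 - δ * (1 - s * (1 - f δ)) := by ring
    have e1 : s * (δ * f δ) + (1 - s) * δ = δ * (1 - s * (1 - f δ)) := by ring
    have e0a : a * (1 - δ * f δ) + (1 - a) * (1 - δ) = 1 - δ * (1 - a * (1 - f δ)) := by ring
    have e1a : a * (δ * f δ) + (1 - a) * δ = δ * (1 - a * (1 - f δ)) := by ring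
    rw [e0, e1, e0a, e1a, mul_div_mul_left _ _ hδ]
  rcases lt_or_eq_of_le ha1 with ha1' | ha1'
  · -- case a < 1
    have hxb := main_lt f hf hf0' a b ha ha1' hb0 hb
    have hxc := main_lt f hf hf0' a c ha ha1' hc hc1.le
    have hne : xi a c ≠ 0 := ne_of_gt (xi_pos ha1' hc1 hac)
    have hdiv := hxb.div hxc hne
    have hrho : rho a b c = xi a b / xi a c := by rw [rho, if_pos ha1']
    rw [hrho]
    refine hdiv.congr' ?_
    filter_upwards [self_mem_nhdsWithin] with δ hδm
    obtain ⟨h0, h1⟩ := hδm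
    simp only [Pi.div_apply]
    rw [hKL b δ (ne_of_gt h0), hKL c δ (ne_of_gt h0),
      div_div_div_comm, div_self (ne_of_gt h0), div_one]
  · -- case a = 1
    subst ha1'
    have hrho : rho 1 b c = (1 - b) / (1 - c) := by rw [rho, if_neg (lt_irrefl 1)]
    rw [hrho]
    have hb1 : b < 1 := lt_of_le_of_ne hb (Ne.symm hab)
    have hcne : (1:ℝ) - c ≠ 0 := ne_of_gt (by linarith)
    have h0case : Tendsto
        (fun δ => KL (fun i => b * α δ i + (1 - b) * β δ i)
                     (fun i => 1 * α δ i + (1 - 1) * β δ i) /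
                  KL (fun i => c * α δ i + (1 - c) * β δ i)
                     (fun i => 1 * α δ i + (1 - 1) * β δ i))
        ((nhdsWithin 0 (Set.Ioo (0:ℝ) 1)) ⊓ Filter.principal {δ | f δ = 0})
        (nhds ((1 - b) / (1 - c))) := by
      have hub := (f0_aux b hb0 hb).mono_left
        (inf_le_left (b := Filter.principal {δ | f δ = 0}))
      have huc := (f0_aux c hc hc1.le).mono_left
        (inf_le_left (b := Filter.principal {δ | f δ = 0}))
      have hdiv := hub.div huc (neg_ne_zero.mpr hcne)
      rw [neg_div_neg_eq] at hdiv
      refine hdiv.congr' ?_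
      filter_upwards [Filter.mem_inf_of_left self_mem_nhdsWithin,
        Filter.mem_inf_of_right (Filter.mem_principal_self _)] with δ hδm hf0δ
      obtain ⟨hd0, hd1⟩ := hδm
      have hfz : f δ = 0 := hf0δ
      simp only [Pi.div_apply]
      rw [hKL b δ (ne_of_gt hd0), hKL c δ (ne_of_gt hd0), hfz]
      norm_num
      rw [div_div_div_comm, div_self (ne_of_gt hd0), div_one]
    have h1case : Tendsto
        (fun δ => KL (fun i => b * α δ i + (1 - b) * β δ i)
                     (fun i => 1 * α δ i + (1 - 1) * β δ i) /
                  KL (fun i => c * α δ i + (1 - c) * β δ i)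
                     (fun i => 1 * α δ i + (1 - 1) * β δ i))
        ((nhdsWithin 0 (Set.Ioo (0:ℝ) 1)) ⊓ Filter.principal {δ | ¬ f δ = 0})
        (nhds ((1 - b) / (1 - c))) := by
      have hub := main_one f hf hf0' b hb0 hb1
      have huc := main_one f hf hf0' c hc hc1
      have hdiv := hub.div huc hcne
      refine hdiv.congr' ?_
      filter_upwards [Filter.mem_inf_of_left self_mem_nhdsWithin,
        Filter.mem_inf_of_right (Filter.mem_principal_self _)] with δ hδm hfne
      obtain ⟨hd0, hd1⟩ := hδm
      have hfne' : f δ ≠ 0 := hfne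
      have hfpos : 0 < f δ := lt_of_le_of_ne (hf δ ⟨hd0, hd1⟩).1 (Ne.symm hfne')
      have hlneg : Real.log (f δ) < 0 := Real.log_neg hfpos (hf δ ⟨hd0, hd1⟩).2
      have hsne : δ * (-Real.log (f δ)) ≠ 0 :=
        mul_ne_zero (ne_of_gt hd0) (ne_of_gt (neg_pos.mpr hlneg))
      simp only [Pi.div_apply]
      rw [hKL b δ (ne_of_gt hd0), hKL c δ (ne_of_gt hd0)]
      have e : 1 - 1 * (1 - f δ) = f δ := by ring
      rw [e, div_div_div_comm, div_self hsne, div_one]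
    have hif := h0case.if h1case
    simpa only [ite_self] using hif
end

section
/- Let A be an m×ℓ stochastic (channel) matrix and B an ℓ×n deterministic stochastic matrix (each row of B has a single 1). For each column j of A, let I(j) be a row index attaining min_i A_{i,j}, let g_j be the gap between the least and second-least entries of column j, g = min_j g_j, and M = I({1,…,ℓ}). Then γ(AB) ≥ γ(A) + (|M| − n)_+·g, where γ(C) := Σ_k min_i C_{i,k} and (x)_+ = max(x,0). -/
noncomputable def gammaMat {m n : ℕ} (C : Matrix (Fin m) (Fin n) ℝ) : ℝ :=
  ∑ k, ⨅ i, C i k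

theorem stmt17 (m l n : ℕ) [NeZero m] [NeZero l] [NeZero n]
    (A : Matrix (Fin m) (Fin l) ℝ) (B : Matrix (Fin l) (Fin n) ℝ)
    (hAnn : ∀ i j, 0 ≤ A i j) (hAsum : ∀ i, ∑ j, A i j = 1)
    (hBdet : ∀ i k, B i k = 0 ∨ B i k = 1) (hBsum : ∀ i, ∑ k, B i k = 1)
    (I : Fin l → Fin m) (hI : ∀ j, A (I j) j = ⨅ i, A i j)
    (gap : Fin l → ℝ)
    (hgap : ∀ j, gap j = (⨅ i : {i : Fin m // i ≠ I j}, A i.1 j) - A (I j) j)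
    (g : ℝ) (hg : g = ⨅ j, gap j)
    (M : Finset (Fin m)) (hM : M = Finset.image I Finset.univ) :
    gammaMat (A * B) ≥ gammaMat A + max ((M.card : ℝ) - n) 0 * g := by
  classical
  -- choose, for each row j of B, a column f j where B j (f j) = 1
  have hBf : ∀ j : Fin l, ∃ k, B j k = 1 := by
    intro j
    by_contra h
    push_neg at h
    have h0 : ∀ k, B j k = 0 := fun k => (hBdet j k).resolve_right (h k)
    have := hBsum j
    simp [h0] at this
  choose f hf using hBf
  set T : Fin n → Finset (Fin l) := fun k => Finset.univ.filter (fun j => f j = k) with hT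
  have hA_min : ∀ i j, A (I j) j ≤ A i j := by
    intro i j
    rw [hI]
    exact ciInf_le (Finite.bddBelow_range _) i
  have hgA : gammaMat A = ∑ j, A (I j) j := by
    unfold gammaMat
    exact Finset.sum_congr rfl (fun j _ => (hI j).symm)
  -- (A*B) i k ≥ sum over fiber
  have hAB : ∀ i k, ∑ j ∈ T k, A i j ≤ (A * B) i k := by
    intro i k
    rw [Matrix.mul_apply]
    calc ∑ j ∈ T k, A i j = ∑ j ∈ T k, A i j * B j k := by
          apply Finset.sum_congr rfl
          intro j hj
          simp only [hT, Finset.mem_filter] at hj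
          rw [← hj.2, hf j, mul_one]
      _ ≤ ∑ j, A i j * B j k := by
          apply Finset.sum_le_sum_of_subset_of_nonneg (Finset.subset_univ _)
          intro j _ _
          rcases hBdet j k with h | h <;> simp [h, hAnn i j, mul_nonneg]
  -- fiberwise decomposition of gamma A
  have hfib : ∑ k, ∑ j ∈ T k, A (I j) j = ∑ j, A (I j) j := by
    rw [hT]
    exact Finset.sum_fiberwise _ _ _
  rcases le_or_gt (M.card : ℝ) (n : ℝ) with h1 | h2
  · -- easy case: the max is 0
    rw [max_eq_right (by linarith), zero_mul, add_zero, hgA, ← hfib]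
    unfold gammaMat
    apply Finset.sum_le_sum
    intro k _
    apply le_ciInf
    intro i
    exact le_trans (Finset.sum_le_sum (fun j _ => hA_min i j)) (hAB i k)
  · -- hard case
    have hMm : 1 < m := by
      have h1n : 1 ≤ (n : ℝ) := by exact_mod_cast Nat.one_le_iff_ne_zero.mpr (NeZero.ne n)
      have : 1 < (M.card : ℝ) := lt_of_le_of_lt h1n h2
      have hMcard : 1 < M.card := by exact_mod_cast this
      have := Finset.card_le_card (Finset.subset_univ M)
      simpa using lt_of_lt_of_le hMcard (by simpa using this)
    have hne : ∀ j : Fin l, Nonempty {i : Fin m // i ≠ I j} := by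
      intro j
      obtain ⟨i, hi⟩ := Fintype.exists_ne_of_one_lt_card (by simpa using hMm) (I j)
      exact ⟨⟨i, hi⟩⟩
    have hgap_nonneg : ∀ j, 0 ≤ gap j := by
      intro j
      rw [hgap j]
      have : A (I j) j ≤ ⨅ i : {i : Fin m // i ≠ I j}, A i.1 j := by
        haveI := hne j
        exact le_ciInf (fun i => hA_min i.1 j)
      linarith
    have hgnn : 0 ≤ g := by
      rw [hg]
      exact le_ciInf hgap_nonneg
    have hgle : ∀ j, g ≤ gap j := by
      intro j
      rw [hg]
      exact ciInf_le (Finite.bddBelow_range _) j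
    -- key pointwise bound
    have key : ∀ (i : Fin m) (k : Fin n),
        ∑ j ∈ T k, A (I j) j + (((T k).image I).card - 1 : ℝ) * g ≤ ∑ j ∈ T k, A i j := by
      intro i k
      set S : Finset (Fin l) := (T k).filter (fun j => I j ≠ i) with hS
      have hSsub : S ⊆ T k := Finset.filter_subset _ _
      have step1 : (S.card : ℝ) * g ≤ ∑ j ∈ T k, (A i j - A (I j) j) := by
        calc (S.card : ℝ) * g = ∑ j ∈ S, g := by rw [Finset.sum_const, nsmul_eq_mul]
          _ ≤ ∑ j ∈ S, (A i j - A (I j) j) := by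
              apply Finset.sum_le_sum
              intro j hj
              simp only [hS, Finset.mem_filter] at hj
              have hle : (⨅ i' : {i' : Fin m // i' ≠ I j}, A i'.1 j) ≤ A i j := by
                haveI := hne j
                exact ciInf_le (Finite.bddBelow_range _) (⟨i, hj.2.symm⟩ : {i' : Fin m // i' ≠ I j})
              have := hgle j
              rw [hgap j] at this
              linarith
          _ ≤ ∑ j ∈ T k, (A i j - A (I j) j) := by
              apply Finset.sum_le_sum_of_subset_of_nonneg hSsub
              intro j _ _
              have := hA_min i j
              linarith
      have hcard : (((T k).image I).card - 1 : ℝ) ≤ (S.card : ℝ) := by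
        have h1 : ((T k).image I).erase i ⊆ S.image I := by
          intro x hx
          rw [Finset.mem_erase] at hx
          obtain ⟨j, hj, hjx⟩ := Finset.mem_image.mp hx.2
          apply Finset.mem_image.mpr
          exact ⟨j, Finset.mem_filter.mpr ⟨hj, by rw [hjx]; exact hx.1⟩, hjx⟩
        have h2 : ((T k).image I).card - 1 ≤ S.card :=
          le_trans (Finset.pred_card_le_card_erase)
            (le_trans (Finset.card_le_card h1) (Finset.card_image_le))
        have h3 : ((T k).image I).card ≤ S.card + 1 := by omega
        have := Nat.cast_le (α := ℝ) |>.mpr h3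
        push_cast at this
        linarith
      have := mul_le_mul_of_nonneg_right hcard hgnn
      have hsplit : ∑ j ∈ T k, (A i j - A (I j) j) = ∑ j ∈ T k, A i j - ∑ j ∈ T k, A (I j) j :=
        Finset.sum_sub_distrib _ _
      linarith
    -- count: sum of fiber image cards ≥ |M|
    have hcount : M.card ≤ ∑ k, ((T k).image I).card := by
      have hsub : M ⊆ Finset.univ.biUnion (fun k => (T k).image I) := by
        rw [hM]
        intro x hx
        obtain ⟨j, _, hjx⟩ := Finset.mem_image.mp hx
        apply Finset.mem_biUnion.mpr
        refine ⟨f j, Finset.mem_univ _, Finset.mem_image.mpr ⟨j, ?_, hjx⟩⟩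
        simp [hT]
      exact le_trans (Finset.card_le_card hsub) (Finset.card_biUnion_le)
    -- assemble
    have main : gammaMat A + ((∑ k, (((T k).image I).card : ℝ)) - n) * g ≤ gammaMat (A * B) := by
      rw [hgA, ← hfib]
      unfold gammaMat
      have expand : ∑ k, ∑ j ∈ T k, A (I j) j + ((∑ k, (((T k).image I).card : ℝ)) - n) * g
          = ∑ k : Fin n, (∑ j ∈ T k, A (I j) j + ((((T k).image I).card : ℝ) - 1) * g) := by
        rw [Finset.sum_add_distrib]
        congr 1
        rw [← Finset.sum_mul, Finset.sum_sub_distrib]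
        simp [Finset.card_univ]
      rw [expand]
      apply Finset.sum_le_sum
      intro k _
      apply le_ciInf
      intro i
      exact le_trans (key i k) (hAB i k)
    have hcast : (M.card : ℝ) ≤ ∑ k, (((T k).image I).card : ℝ) := by
      have := Nat.cast_le (α := ℝ) |>.mpr hcount
      push_cast at this
      exact this
    have hmax : max ((M.card : ℝ) - n) 0 = (M.card : ℝ) - n := max_eq_left (by linarith)
    rw [hmax]
    have : ((M.card : ℝ) - n) * g ≤ ((∑ k, (((T k).image I).card : ℝ)) - n) * g :=
      mul_le_mul_of_nonneg_right (by linarith) hgnn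
    linarith
end

section
/- Define T(a) = 1 − ξ_{1-a,↑}^{-1}(ξ_{1-a}(0)) for a ∈ (e^{-1}, 1), where ξ_{s,↑} is the restriction of ξ_s to [s,1]. Then T is strictly increasing on (e^{-1}, 1). -/
private lemma gmono : StrictMonoOn (fun x : ℝ => 1 + (x⁻¹ - 1) * Real.log (1 - x))
    (Set.Ioo (0:ℝ) 1) := by
  apply strictMonoOn_of_deriv_pos (convex_Ioo 0 1)
  · intro x hx
    have hx0 : x ≠ 0 := ne_of_gt hx.1
    have h1x : (1:ℝ) - x ≠ 0 := by
      have := hx.2; intro h; simp only [sub_eq_zero] at h; linarith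
    exact (continuousAt_const.add (((continuousAt_inv₀ hx0).sub continuousAt_const).mul
      ((Real.continuousAt_log h1x).comp (continuousAt_const.sub continuousAt_id)))).continuousWithinAt
  · intro x hx
    rw [interior_Ioo] at hx
    have hx0 : (0:ℝ) < x := hx.1
    have h1x : (0:ℝ) < 1 - x := by linarith [hx.2]
    have hlog : Real.log (1 - x) < -x := by
      have := Real.log_lt_sub_one_of_pos h1x (by intro h; apply ne_of_gt hx0; linarith)
      linarith
    have hl : HasDerivAt (fun y : ℝ => Real.log (1 - y)) ((1 - x)⁻¹ * (-1)) x :=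
      (Real.hasDerivAt_log h1x.ne').comp x ((hasDerivAt_id x).const_sub 1)
    have hd : HasDerivAt (fun y : ℝ => 1 + (y⁻¹ - 1) * Real.log (1 - y))
        (-(x^2)⁻¹ * Real.log (1 - x) + (x⁻¹ - 1) * ((1 - x)⁻¹ * (-1))) x :=
      (((hasDerivAt_inv hx0.ne').sub_const 1).mul hl).const_add 1
    rw [hd.deriv]
    have e1 : (x⁻¹ - 1) * ((1 - x)⁻¹ * (-1)) = -x⁻¹ := by
      field_simp
    rw [e1]
    have h2 : (0:ℝ) < (x^2)⁻¹ := by positivity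
    have h3 : (x^2)⁻¹ * x = x⁻¹ := by
      field_simp
    nlinarith [mul_lt_mul_of_pos_left hlog h2]

private lemma key (a : ℝ) (ha : Real.exp (-1) < a) (ha1 : a < 1) (u : ℝ)
    (hu : u ∈ Set.Icc (1 - a) 1) (heq : xi (1 - a) u = xi (1 - a) 0) :
    u ∈ Set.Ioo (0:ℝ) 1 ∧ 1 + (u⁻¹ - 1) * Real.log (1 - u) = -Real.log a := by
  have ha0 : (0:ℝ) < a := lt_trans (Real.exp_pos _) ha
  have hloga : -1 < Real.log a := by
    rwa [Real.lt_log_iff_exp_lt ha0]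
  unfold xi zeta at heq
  have hrw : (1:ℝ) - (1 - a) = a := by ring
  rw [hrw, sub_zero, Real.log_one] at heq
  -- heq : u + (1 - u) * log (1 - u) - ((1-a) + (1-u) * log a)
  --     = 0 + (1-0)*0 - ((1-a) + (1-0) * log a)
  have h1 : u + (1 - u) * Real.log (1 - u) + u * Real.log a = 0 := by
    linear_combination heq
  have hu0 : (0:ℝ) < u := lt_of_lt_of_le (by linarith) hu.1
  have hu1 : u < 1 := by
    rcases lt_or_eq_of_le hu.2 with h | h
    · exact h
    · exfalso
      rw [h] at h1
      simp at h1
      linarith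
  refine ⟨⟨hu0, hu1⟩, ?_⟩
  have h2 : u * (1 + (u⁻¹ - 1) * Real.log (1 - u)) = u * (-Real.log a) := by
    field_simp
    linear_combination h1
  exact mul_left_cancel₀ hu0.ne' h2

theorem stmt18 (T : ℝ → ℝ)
    (hT : ∀ a ∈ Set.Ioo (Real.exp (-1)) 1,
      1 - T a ∈ Set.Icc (1 - a) 1 ∧ xi (1 - a) (1 - T a) = xi (1 - a) 0) :
    StrictMonoOn T (Set.Ioo (Real.exp (-1)) 1) := by
  intro a ha b hb hab
  obtain ⟨hua, heqa⟩ := hT a ha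
  obtain ⟨hub, heqb⟩ := hT b hb
  obtain ⟨hIa, hga⟩ := key a ha.1 ha.2 _ hua heqa
  obtain ⟨hIb, hgb⟩ := key b hb.1 hb.2 _ hub heqb
  have hlog : Real.log a < Real.log b :=
    Real.log_lt_log (lt_trans (Real.exp_pos _) ha.1) hab
  have hglt : (fun x : ℝ => 1 + (x⁻¹ - 1) * Real.log (1 - x)) (1 - T b)
      < (fun x : ℝ => 1 + (x⁻¹ - 1) * Real.log (1 - x)) (1 - T a) := by
    simp only
    rw [hga, hgb]
    linarith
  have := (gmono.lt_iff_lt hIb hIa).mp hglt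
  linarith
end
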